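/- arXiv:1302.0744 — 7 statements merged into one kernel-verified Lean document; each statement's English description precedes it below -/
import Mathlib

section
/- (Lemma 1) Let q be a prime power, F_q a finite field with q elements, and F an extension field of F_q of degree m. Let α, n, J, J̃ be positive integers with J̃ ≤ J ≤ m, and let G be a J × (nα) matrix over F_q with rank(G) ≥ J̃, its columns grouped into n thick columns of width α. Let ρ be the smallest integer such that every subset S of {1,…,n} with |S| = ρ satisfies rank(G|_S) ≥ J̃. Let θ_1,…,θ_J ∈ F be linearly independent over F_q, and let C ⊆ F^{nα} be the set of all vectors (f(θ_1),…,f(θ_J))·G, where f ranges over the linearized polynomials of q-degree at most J̃−1 over F. Then the map f ↦ (f(θ_1),…,f(θ_J))·G is injective (so |C| = q^{m·J̃}), and the minimum thick Hamming distance of C, viewed as a length-n code over the alphabet F^α, is exactly D_min = n − ρ + 1. -/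
/-- The rank of the submatrix of `G` formed by the thick columns indexed by `S`:
columns of `G` are indexed by pairs `(j, a)` with `j` the thick-column index and
`a` the position inside the thick column (of width `α`). -/
noncomputable def thickRank {K : Type*} [Field K] {R C : Type*} [Fintype C] [DecidableEq C]
    {α : ℕ} (G : Matrix R (C × Fin α) K) (S : Finset C) : ℕ :=
  (G.submatrix id (fun p : {p : C × Fin α // p.1 ∈ S} => (p : C × Fin α))).rank

/- The thick Hamming distance between two words of `F^{nα}`, viewed as length-`n` words
over the alphabet `F^α`: the number of thick positions `j` at which their blocks differ. -/
open scoped Classical in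
noncomputable def thickDist {F C : Type*} [Fintype C] {α : ℕ}
    (v w : C × Fin α → F) : ℕ :=
  (Finset.univ.filter fun j : C => ∃ a, v (j, a) ≠ w (j, a)).card

set_option maxHeartbeats 1000000 in
set_option synthInstance.maxHeartbeats 200000 in
open Matrix Module Submodule Polynomial in
/-- **Lemma 1.** Let `q` be a prime power, `Fq` a subfield with `q` elements
of a field `F` with `[F : Fq] = m`, and `α, n, J, J̃` positive integers with `J̃ ≤ J ≤ m`.
Let `G` be a `J × (nα)` matrix over `Fq` of rank at least `J̃`, whose columns are grouped
into `n` thick columns of width `α`, and let `ρ` be the smallest integer such that every set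
`S` of `ρ` thick columns satisfies `rank (G|_S) ≥ J̃`.  Let `θ₁, …, θ_J ∈ F` be linearly
independent over `Fq` and let `C` be the code consisting of all vectors
`(f(θ₁), …, f(θ_J))·G`, where `f` ranges over linearized polynomials of `q`-degree at most
`J̃ - 1` over `F` (encoded by their coefficient vectors `u : Fin J̃ → F`).  Then the encoding
map is injective (so `|C| = q ^ (m J̃)`) and the minimum thick Hamming distance of `C`,
viewed as a length-`n` code over the alphabet `F^α`, is exactly `n - ρ + 1`. -/
theorem stmt_3 (q m α n J Jt : ℕ) (hq : IsPrimePow q)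
    (hα : 0 < α) (hn : 0 < n) (hJt : 0 < Jt) (hJtJ : Jt ≤ J) (hJm : J ≤ m)
    (F : Type*) [Field F] (Fq : Subfield F) [Fintype Fq]
    (hcard : Fintype.card Fq = q) (hm : Module.finrank Fq F = m)
    (G : Matrix (Fin J) (Fin n × Fin α) Fq) (hG : Jt ≤ G.rank)
    (ρ : ℕ)
    (hρ : IsLeast {s : ℕ | ∀ S : Finset (Fin n), S.card = s → Jt ≤ thickRank G S} ρ)
    (θ : Fin J → F) (hθ : LinearIndependent Fq θ)
    (enc : (Fin Jt → F) → (Fin n × Fin α → F))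
    (henc : ∀ u p, enc u p = ∑ i, (∑ l, u l * θ i ^ q ^ (l : ℕ)) * (G i p : F)) :
    Function.Injective enc
    ∧ (Set.range enc).ncard = q ^ (m * Jt)
    ∧ (∀ u v, u ≠ v → n - ρ + 1 ≤ thickDist (enc u) (enc v))
    ∧ (∃ u v, u ≠ v ∧ thickDist (enc u) (enc v) = n - ρ + 1) := by
  classical
  have hq2 : 2 ≤ q := hq.two_le
  obtain ⟨r, k, hr, hk, hrk⟩ := hq
  have hrp : r.Prime := Nat.prime_iff.mpr hr
  haveI : Fact r.Prime := ⟨hrp⟩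
  have hcharFq : CharP Fq r := by
    obtain ⟨p0, hp0⟩ := CharP.exists Fq
    haveI := hp0
    obtain ⟨n0, hp0p, hcard0⟩ := FiniteField.card Fq p0
    have hrq : r ∣ q := hrk ▸ dvd_pow_self r hk.ne'
    have hreq : r = p0 := by
      have hdvd : r ∣ p0 ^ (n0 : ℕ) := by rw [← hcard0, hcard]; exact hrq
      exact (Nat.prime_dvd_prime_iff_eq hrp hp0p).mp (hrp.dvd_of_dvd_pow hdvd)
    exact hreq ▸ hp0
  haveI := hcharFq
  haveI : CharP F r := charP_of_injective_ringHom (f := Fq.subtype)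
    Subtype.val_injective r
  haveI : FiniteDimensional Fq F := Module.finite_of_finrank_pos (by omega)
  haveI : Finite F := Module.finite_of_finite Fq
  haveI : Fintype F := Fintype.ofFinite F
  -- powers of `q` behave additively and fix `Fq`
  have hql : ∀ l : ℕ, q ^ l = r ^ (k * l) := fun l => by rw [pow_mul, hrk]
  have hsumpow : ∀ (l : ℕ) (s : Finset (Fin J)) (f : Fin J → F),
      (∑ i ∈ s, f i) ^ q ^ l = ∑ i ∈ s, f i ^ q ^ l := by
    intro l s f
    rw [hql]
    exact map_sum (iterateFrobenius F r (k * l)) f s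
  have hfixq : ∀ c : Fq, (c : F) ^ q = (c : F) := by
    intro c
    have h1 : c ^ q = c := by
      have := FiniteField.pow_card c
      rwa [hcard] at this
    calc (c : F) ^ q = ((c ^ q : Fq) : F) := by push_cast; ring
    _ = (c : F) := by rw [h1]
  have hfix : ∀ (c : Fq) (l : ℕ), (c : F) ^ q ^ l = (c : F) := by
    intro c l
    induction l with
    | zero => simp
    | succ l ih => rw [pow_succ, pow_mul, ih, hfixq]
  -- the linearized polynomial evaluation
  set fp : (Fin Jt → F) → F → F := fun u x => ∑ l : Fin Jt, u l * x ^ q ^ (l : ℕ) with hfp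
  have hqlpos : ∀ l : ℕ, q ^ l ≠ 0 := fun l => pow_ne_zero l (by omega)
  have hadd : ∀ (x y : F) (l : ℕ), (x + y) ^ q ^ l = x ^ q ^ l + y ^ q ^ l := by
    intro x y l
    rw [hql]
    exact add_pow_char_pow ..
  -- `fp u` as an `Fq`-linear map
  have fpL : ∀ u : Fin Jt → F, ∃ g : F →ₗ[Fq] F, ∀ x, g x = fp u x := by
    intro u
    refine ⟨⟨⟨fun x => fp u x, fun x y => ?_⟩, fun c x => ?_⟩, fun x => rfl⟩
    · simp only [hfp, hadd, mul_add, Finset.sum_add_distrib]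
    · show fp u ((c : F) * x) = (c : F) * fp u x
      simp only [hfp, mul_pow, hfix, Finset.mul_sum]
      exact Finset.sum_congr rfl fun l _ => by ring
  -- the injective `Fq`-linear combination map
  set Tl : (Fin J → Fq) →ₗ[Fq] F := Fintype.linearCombination Fq θ with hTl
  have hTlapp : ∀ c, Tl c = ∑ i, (c i : F) * θ i := by
    intro c
    rw [hTl, Fintype.linearCombination_apply]
    rfl
  have Tinj : Function.Injective Tl := by
    have h0 : ∀ c, Tl c = 0 → c = 0 := by
      intro c hc
      have hz : ∑ i, c i • θ i = 0 := by
        rw [← hc, hTlapp]; rfl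
      have := Fintype.linearIndependent_iff.mp hθ c hz
      funext i; exact this i
    intro a b hab
    have hz : Tl (a - b) = 0 := by rw [map_sub, hab, sub_self]
    have := h0 _ hz
    exact sub_eq_zero.mp this
  set η : Fin n × Fin α → F := fun p => Tl (fun i => G i p) with hη
  -- the key formula : enc u p = fp u (η p)
  have hkey : ∀ u p, enc u p = fp u (η p) := by
    intro u p
    rw [henc, hη]
    show _ = fp u (Tl fun i => G i p)
    rw [hTlapp]
    simp only [hfp]
    have hpow : ∀ l : Fin Jt, (∑ i, (G i p : F) * θ i) ^ q ^ (l : ℕ)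
        = ∑ i, (G i p : F) * θ i ^ q ^ (l : ℕ) := by
      intro l
      rw [hsumpow]
      exact Finset.sum_congr rfl fun i _ => by rw [mul_pow, hfix]
    simp only [hpow, Finset.mul_sum, Finset.sum_mul]
    rw [Finset.sum_comm]
    exact Finset.sum_congr rfl fun i _ => Finset.sum_congr rfl fun l _ => by ring
  -- Lemma A : root counting for nonzero linearized polynomials
  have hroots : ∀ u : Fin Jt → F, u ≠ 0 → ∀ T : Finset F,
      (∀ x ∈ T, fp u x = 0) → T.card ≤ q ^ (Jt - 1) := by
    intro u hu T hT
    set P : F[X] := ∑ l : Fin Jt, C (u l) * X ^ (q ^ (l : ℕ)) with hP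
    have hev : ∀ x, P.eval x = fp u x := by
      intro x
      simp [hP, hfp, eval_finset_sum]
    obtain ⟨l0, hl0⟩ : ∃ l0, u l0 ≠ 0 := Function.ne_iff.mp hu
    have hcoeff : P.coeff (q ^ (l0 : ℕ)) = u l0 := by
      rw [hP, finset_sum_coeff]
      rw [Finset.sum_eq_single l0]
      · simp [coeff_X_pow]
      · intro l _ hne
        have : ¬ ((q:ℕ) ^ (l0 : ℕ) = q ^ (l : ℕ)) := by
          intro h
          exact hne (Fin.ext (Nat.pow_right_injective hq2 h.symm))
        simp [coeff_X_pow, this]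
      · intro h
        exact absurd (Finset.mem_univ l0) h
    have hP0 : P ≠ 0 := fun h => hl0 (by rw [← hcoeff, h, coeff_zero])
    have hdeg : P.natDegree ≤ q ^ (Jt - 1) := by
      apply natDegree_sum_le_of_forall_le
      intro l _
      refine (natDegree_C_mul_le _ _).trans ?_
      rw [natDegree_X_pow]
      exact Nat.pow_le_pow_right (by omega) (by omega)
    have hsub : T.val ≤ P.roots := by
      rw [Multiset.le_iff_subset T.nodup]
      intro x hx
      exact (mem_roots hP0).mpr (by rw [IsRoot, hev]; exact hT x hx)
    calc T.card ≤ Multiset.card P.roots := Multiset.card_le_card hsub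
    _ ≤ P.natDegree := P.card_roots'
    _ ≤ q ^ (Jt - 1) := hdeg
  -- thickRank as dimension of a column span
  have hspanrank : ∀ S : Finset (Fin n),
      thickRank G S = finrank Fq (span Fq (Gᵀ '' {p | p.1 ∈ S})) := by
    intro S
    have h1 : (G.submatrix id (fun p : {p : Fin n × Fin α // p.1 ∈ S} => (p : Fin n × Fin α)))ᵀ
        = Gᵀ ∘ (fun p : {p : Fin n × Fin α // p.1 ∈ S} => (p : Fin n × Fin α)) := rfl
    have hset : Set.range (G.submatrix id
        (fun p : {p : Fin n × Fin α // p.1 ∈ S} => (p : Fin n × Fin α))).col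
        = Gᵀ '' {p | p.1 ∈ S} := by
      ext x
      exact ⟨fun ⟨p, hp⟩ => ⟨p.1, p.2, hp⟩, fun ⟨p, hp, hx⟩ => ⟨⟨p, hp⟩, hx⟩⟩
    rw [thickRank, Matrix.rank_eq_finrank_span_cols, hset]
  -- Lemma D : vanishing on a high-rank block set forces zero
  have hD : ∀ (S : Finset (Fin n)), Jt ≤ thickRank G S → ∀ u : Fin Jt → F,
      (∀ p : Fin n × Fin α, p.1 ∈ S → fp u (η p) = 0) → u = 0 := by
    intro S hS u hvan
    by_contra hu
    obtain ⟨g, hg⟩ := fpL u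
    set V : Submodule Fq (Fin J → Fq) := span Fq (Gᵀ '' {p | p.1 ∈ S}) with hV
    have hVrank : Jt ≤ finrank Fq V := by rw [← hspanrank]; exact hS
    obtain ⟨w, hw⟩ := exists_linearIndependent_of_le_finrank hVrank
    have hwA : LinearIndependent Fq fun i : Fin Jt => (w i : Fin J → Fq) :=
      hw.map' V.subtype V.ker_subtype
    have hker : V ≤ LinearMap.ker (g.comp Tl) := by
      rw [hV, span_le]
      rintro _ ⟨p, hp, rfl⟩
      simp only [SetLike.mem_coe, LinearMap.mem_ker, LinearMap.comp_apply]
      rw [hg]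
      exact hvan p hp
    -- all `Fq`-combinations of the `Tl (w i)` are roots of `fp u`
    set cmb : (Fin Jt → Fq) → F := fun c => Tl (∑ i, c i • (w i : Fin J → Fq)) with hcmb
    have hcmbinj : Function.Injective cmb := by
      intro a b hab
      have h1 : (∑ i, a i • (w i : Fin J → Fq)) = ∑ i, b i • (w i : Fin J → Fq) := Tinj hab
      have h2 : ∑ i, (a i - b i) • (w i : Fin J → Fq) = 0 := by
        simp [sub_smul, Finset.sum_sub_distrib, h1]
      have := Fintype.linearIndependent_iff.mp hwA _ h2
      funext i
      have hi := this i
      rwa [sub_eq_zero] at hi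
    set T : Finset F := Finset.univ.image cmb with hT
    have hTcard : T.card = q ^ Jt := by
      rw [hT, Finset.card_image_of_injective _ hcmbinj, Finset.card_univ]
      simp [hcard]
    have hTroot : ∀ x ∈ T, fp u x = 0 := by
      intro x hx
      rw [hT, Finset.mem_image] at hx
      obtain ⟨c, _, rfl⟩ := hx
      have hmem : (∑ i, c i • (w i : Fin J → Fq)) ∈ V :=
        Submodule.sum_mem V fun i _ => Submodule.smul_mem V _ (by simp)
      have := hker hmem
      rw [LinearMap.mem_ker, LinearMap.comp_apply, hg] at this
      exact this
    have := hroots u hu T hTroot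
    rw [hTcard] at this
    have hlt : q ^ (Jt - 1) < q ^ Jt := Nat.pow_lt_pow_right (by omega) (by omega)
    omega
  -- `fp` is linear in `u`
  have hfpsub : ∀ (u v : Fin Jt → F) (x : F), fp (u - v) x = fp u x - fp v x := by
    intro u v x
    simp [hfp, sub_mul, Finset.sum_sub_distrib]
  -- basic facts about ρ
  have hρ1 : 1 ≤ ρ := by
    by_contra h
    have hρ0 : ρ = 0 := by omega
    have := hρ.1 ∅ (by simp [hρ0])
    have hle : thickRank G (∅ : Finset (Fin n)) ≤ 0 := by
      haveI : IsEmpty {p : Fin n × Fin α // p.1 ∈ (∅ : Finset (Fin n))} :=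
        ⟨fun p => by simpa using p.2⟩
      calc thickRank G (∅ : Finset (Fin n)) ≤ Fintype.card {p : Fin n × Fin α // p.1 ∈ (∅ : Finset (Fin n))} :=
        Matrix.rank_le_card_width _
      _ = 0 := by simp
    omega
  have hranku : Jt ≤ thickRank G Finset.univ := by
    rw [hspanrank]
    have h1 : {p : Fin n × Fin α | p.1 ∈ (Finset.univ : Finset (Fin n))} = Set.univ := by
      ext p; simp
    have hset : (Gᵀ '' Set.univ : Set (Fin J → Fq)) = Set.range G.col := by
      ext x; exact ⟨fun ⟨p, _, hp⟩ => ⟨p, hp⟩, fun ⟨p, hp⟩ => ⟨p, trivial, hp⟩⟩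
    rw [h1, hset, ← Matrix.rank_eq_finrank_span_cols]
    exact hG
  have hρn : ρ ≤ n := by
    apply hρ.2
    intro S hScard
    have : S = Finset.univ := Finset.eq_univ_of_card S (by simp [hScard])
    rw [this]
    exact hranku
  -- a uniform description of thickDist via the complement of the agreement set
  have hdist : ∀ (v w : Fin n × Fin α → F) (Z : Finset (Fin n)),
      (∀ j, j ∈ Z ↔ ∀ a, v (j, a) = w (j, a)) → thickDist v w = n - Z.card := by
    intro v w Z hZ
    have h1 : (Finset.univ.filter fun j : Fin n => ∃ a, v (j, a) ≠ w (j, a)) = Zᶜ := by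
      ext j
      simp only [Finset.mem_filter, Finset.mem_univ, true_and, Finset.mem_compl, hZ j]
      push_neg
      rfl
    show (Finset.univ.filter _).card = _
    rw [show (Finset.univ.filter fun j : Fin n => ∃ a, v (j, a) ≠ w (j, a)) = Zᶜ from h1,
      Finset.card_compl, Fintype.card_fin]
  -- 1. injectivity
  have hinj : Function.Injective enc := by
    intro u v huv
    have hz : ∀ p : Fin n × Fin α, p.1 ∈ (Finset.univ : Finset (Fin n)) → fp (u - v) (η p) = 0 := by
      intro p _
      rw [hfpsub]
      have := congrFun huv p
      rw [hkey, hkey] at this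
      rw [this, sub_self]
    have := hD Finset.univ hranku (u - v) hz
    exact sub_eq_zero.mp this
  refine ⟨hinj, ?_, ?_, ?_⟩
  -- 2. cardinality
  · rw [← Nat.card_coe_set_eq, Nat.card_range_of_injective hinj,
      Nat.card_eq_fintype_card, Fintype.card_fun]
    rw [card_eq_pow_finrank (K := Fq) (V := F), hcard, hm, Fintype.card_fin, ← pow_mul]
  -- 3. lower bound on the distance
  · intro u v huv
    set w := u - v with hw
    have hw0 : w ≠ 0 := sub_ne_zero.mpr huv
    set Z : Finset (Fin n) :=
      Finset.univ.filter (fun j : Fin n => ∀ a, fp w (η (j, a)) = 0) with hZdef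
    have hdZ : thickDist (enc u) (enc v) = n - Z.card := by
      apply hdist
      intro j
      simp only [hZdef, Finset.mem_filter, Finset.mem_univ, true_and]
      constructor
      · intro h a
        have := h a
        rw [hkey, hkey, ← sub_eq_zero, ← hfpsub]
        exact this
      · intro h a
        have := h a
        rw [hkey, hkey, ← sub_eq_zero, ← hfpsub] at this
        exact this
    have hZlt : Z.card < ρ := by
      by_contra h
      push_neg at h
      obtain ⟨S, hSZ, hScard⟩ := Finset.exists_subset_card_eq h
      have hvan : ∀ p : Fin n × Fin α, p.1 ∈ S → fp w (η p) = 0 := by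
        intro p hp
        have := hSZ hp
        rw [hZdef, Finset.mem_filter] at this
        exact this.2 p.2
      exact hw0 (hD S (hρ.1 S hScard) w hvan)
    have hZn : Z.card ≤ n := by
      calc Z.card ≤ (Finset.univ : Finset (Fin n)).card := Finset.card_le_card (Finset.filter_subset _ _)
      _ = n := by simp
    omega
  -- 4. the distance is attained
  · -- get a bad set S₀ of size ρ - 1
    have hnotin : ¬ (∀ S : Finset (Fin n), S.card = ρ - 1 → Jt ≤ thickRank G S) := by
      intro h
      have := hρ.2 h
      omega
    push_neg at hnotin
    obtain ⟨S₀, hS₀card, hS₀rank⟩ := hnotin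
    -- the span of the η's over S₀
    set W : Submodule Fq F := span Fq (η '' {p | p.1 ∈ S₀}) with hW
    have hWrank : finrank Fq W < Jt := by
      have h1 : η '' {p | p.1 ∈ S₀} = Tl '' (Gᵀ '' {p | p.1 ∈ S₀}) := by
        ext x
        exact ⟨fun ⟨p, hp, hx⟩ => ⟨_, ⟨p, hp, rfl⟩, hx⟩, fun ⟨_, ⟨p, hp, hy⟩, hx⟩ => ⟨p, hp, by rw [← hx, ← hy]; rfl⟩⟩
      have h2 : W = Submodule.map Tl (span Fq (Gᵀ '' {p | p.1 ∈ S₀})) := by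
        rw [hW, h1, Submodule.map_span]
      have h3 : finrank Fq W = finrank Fq (span Fq (Gᵀ '' {p | p.1 ∈ S₀})) := by
        rw [h2]
        exact (LinearEquiv.finrank_eq
          (Submodule.equivMapOfInjective Tl Tinj _)).symm
      rw [h3, ← hspanrank]
      exact hS₀rank
    set d : ℕ := finrank Fq W with hd
    set wb : Fin d → F := fun i => ((Module.finBasis Fq W) i : F) with hwb
    have hwbspan : span Fq (Set.range wb) = W := by
      have h1 : Set.range wb = W.subtype '' Set.range (Module.finBasis Fq W) := by
        rw [← Set.range_comp]; rfl
      rw [h1, ← Submodule.map_span, Basis.span_eq, Submodule.map_subtype_top]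
    -- find a nonzero u annihilating all of W
    set M : Matrix (Fin d) (Fin Jt) F := fun i l => wb i ^ q ^ (l : ℕ) with hM
    have hMnotinj : ¬ Function.Injective M.mulVecLin := by
      intro h
      have := LinearMap.finrank_le_finrank_of_injective h
      rw [Module.finrank_pi, Module.finrank_pi] at this
      simp only [Fintype.card_fin] at this
      omega
    rw [Function.not_injective_iff] at hMnotinj
    obtain ⟨u₁, u₂, hu12, hne⟩ := hMnotinj
    set u : Fin Jt → F := u₁ - u₂ with hu
    have hu0 : u ≠ 0 := sub_ne_zero.mpr hne
    have hMu : ∀ i, ∑ l, M i l * u l = 0 := by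
      intro i
      have : M.mulVecLin u = 0 := by
        rw [hu, map_sub, hu12, sub_self]
      have := congrFun (congrArg (fun f => (f : Fin d → F)) this) i
      simpa [Matrix.mulVecLin_apply, Matrix.mulVec, dotProduct] using this
    have hwbvan : ∀ i, fp u (wb i) = 0 := by
      intro i
      rw [hfp]
      have := hMu i
      simpa [hM, mul_comm] using this
    obtain ⟨g, hg⟩ := fpL u
    have hWvan : ∀ x ∈ W, fp u x = 0 := by
      intro x hx
      have hker : W ≤ LinearMap.ker g := by
        rw [← hwbspan, span_le]
        rintro _ ⟨i, rfl⟩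
        simp only [SetLike.mem_coe, LinearMap.mem_ker]
        rw [hg]
        exact hwbvan i
      have := hker hx
      rw [LinearMap.mem_ker] at this
      rw [← hg]
      exact this
    have hvan1 : ∀ p : Fin n × Fin α, p.1 ∈ S₀ → fp u (η p) = 0 := by
      intro p hp
      exact hWvan _ (subset_span ⟨p, hp, rfl⟩)
    have hvan2 : ∀ j : Fin n, j ∉ S₀ → ∃ a, fp u (η (j, a)) ≠ 0 := by
      intro j hj
      by_contra h
      push_neg at h
      have hScard : (insert j S₀).card = ρ := by
        rw [Finset.card_insert_of_notMem hj, hS₀card]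
        omega
      have hvan : ∀ p : Fin n × Fin α, p.1 ∈ insert j S₀ → fp u (η p) = 0 := by
        intro p hp
        rcases Finset.mem_insert.mp hp with h1 | h1
        · have : p = (j, p.2) := by rw [← h1]
          rw [this]
          exact h p.2
        · exact hvan1 p h1
      exact hu0 (hD _ (hρ.1 _ hScard) u hvan)
    refine ⟨u, 0, hu0, ?_⟩
    have henc0 : ∀ p, enc (0 : Fin Jt → F) p = 0 := by
      intro p
      rw [hkey]
      simp [hfp]
    have hdZ : thickDist (enc u) (enc 0) = n - S₀.card := by
      apply hdist
      intro j
      constructor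
      · intro hj a
        rw [hkey, henc0]
        exact hvan1 (j, a) hj
      · intro hj
        by_contra hjS
        obtain ⟨a, ha⟩ := hvan2 j hjS
        have := hj a
        rw [hkey, henc0] at this
        exact ha this
    rw [hdZ, hS₀card]
    omega
end

section
/- Let q be a prime power, F_q a finite field with q elements, and F an extension field of F_q of degree m. Let α, n, J, J̃ be positive integers with J̃ ≤ J ≤ m, let G be a J × (nα) matrix over F_q with its columns grouped into n thick columns of width α, and let θ_1,…,θ_J ∈ F be linearly independent over F_q. If S ⊆ {1,…,n} is a set of thick-column indices with rank(G|_S) ≥ J̃, then any two distinct linearized polynomials f, g of q-degree at most J̃−1 over F give codewords (f(θ_1),…,f(θ_J))·G and (g(θ_1),…,g(θ_J))·G that differ in at least one thick position belonging to S; i.e., the thick symbols indexed by S determine f uniquely, so the code recovers from the erasure of all thick symbols outside S. -/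
set_option maxHeartbeats 1000000
set_option synthInstance.maxHeartbeats 400000


/-- Let `q` be a prime power, `Fq` a subfield with `q` elements of a field
`F` with `[F : Fq] = m`, and `α, n, J, J̃` positive integers with `J̃ ≤ J ≤ m`.  Let `G` be
a `J × (nα)` matrix over `Fq` with its columns grouped into `n` thick columns of width `α`,
and let `θ₁, …, θ_J ∈ F` be linearly independent over `Fq`.  If `S` is a set of
thick-column indices with `rank (G|_S) ≥ J̃`, then any two distinct linearized polynomials
`f, g` of `q`-degree at most `J̃ - 1` over `F` (encoded by their coefficient vectors) give
codewords `(f(θ₁), …, f(θ_J))·G` and `(g(θ₁), …, g(θ_J))·G` that differ in at least one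
thick position belonging to `S`: the thick symbols indexed by `S` determine `f` uniquely,
so the code recovers from the erasure of all thick symbols outside `S`. -/
theorem stmt_4 (q m α n J Jt : ℕ) (hq : IsPrimePow q)
    (hα : 0 < α) (hn : 0 < n) (hJt : 0 < Jt) (hJtJ : Jt ≤ J) (hJm : J ≤ m)
    (F : Type*) [Field F] (Fq : Subfield F) [Fintype Fq]
    (hcard : Fintype.card Fq = q) (hm : Module.finrank Fq F = m)
    (G : Matrix (Fin J) (Fin n × Fin α) Fq)
    (θ : Fin J → F) (hθ : LinearIndependent Fq θ)
    (enc : (Fin Jt → F) → (Fin n × Fin α → F))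
    (henc : ∀ u p, enc u p = ∑ i, (∑ l, u l * θ i ^ q ^ (l : ℕ)) * (G i p : F))
    (S : Finset (Fin n)) (hS : Jt ≤ thickRank G S) :
    ∀ u v : Fin Jt → F, u ≠ v → ∃ j ∈ S, ∃ a : Fin α, enc u (j, a) ≠ enc v (j, a) := by
  classical
  intro u v huv
  by_contra hcon
  push_neg at hcon
  have hq2 : 2 ≤ q := hq.two_le
  obtain ⟨p, k, hp, hk, hpk⟩ := hq
  have hpp : p.Prime := Nat.prime_iff.mpr hp
  have hql : ∀ l : ℕ, q ^ l = p ^ (k * l) := fun l => by rw [pow_mul, hpk]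
  -- characteristic
  have hcast : ((q : ℕ) : Fq) = 0 := by
    rw [← hcard]; exact FiniteField.cast_card_eq_zero Fq
  have hrc : ringChar Fq = p := by
    have h1 : ringChar Fq ∣ q := ringChar.dvd hcast
    have h2 : (ringChar Fq).Prime := by
      haveI := ringChar.charP Fq; exact CharP.char_is_prime Fq (ringChar Fq)
    rw [← hpk] at h1
    exact (Nat.prime_dvd_prime_iff_eq h2 hpp).mp (h2.dvd_of_dvd_pow h1)
  haveI : CharP Fq p := hrc ▸ ringChar.charP Fq
  haveI : CharP F p := charP_of_injective_ringHom (f := Fq.subtype) Subtype.val_injective p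
  haveI : ExpChar F p := ExpChar.prime hpp
  -- frobenius facts
  have hfrob : ∀ (l : ℕ) (s : Finset (Fin J)) (g : Fin J → F),
      (∑ i ∈ s, g i) ^ q ^ l = ∑ i ∈ s, (g i) ^ q ^ l := by
    intro l s g
    rw [hql]
    have := map_sum (iterateFrobenius F p (k * l)) g s
    simp only [iterateFrobenius_def] at this
    exact this
  have hfrob2 : ∀ (l : ℕ) (x y : F), (x + y) ^ q ^ l = x ^ q ^ l + y ^ q ^ l := by
    intro l x y
    rw [hql]
    exact add_pow_expChar_pow x y p (k * l)
  have hfq : ∀ (c : Fq) (l : ℕ), (c : F) ^ q ^ l = (c : F) := by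
    intro c l
    have h : c ^ q ^ l = c := by rw [← hcard]; exact FiniteField.pow_card_pow l c
    calc (c : F) ^ q ^ l = ((c ^ q ^ l : Fq) : F) := by push_cast; ring
    _ = (c : F) := by rw [h]
  -- the difference vector
  set w : Fin Jt → F := u - v with hwdef
  have hw : w ≠ 0 := sub_ne_zero.mpr huv
  -- the linearized map φ
  set φ : F →ₗ[Fq] F :=
    { toFun := fun x => ∑ l : Fin Jt, w l * x ^ q ^ (l : ℕ)
      map_add' := by
        intro x y
        simp only [hfrob2, mul_add]
        rw [Finset.sum_add_distrib]
      map_smul' := by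
        intro c x
        simp only [RingHom.id_apply, Finset.smul_sum]
        refine Finset.sum_congr rfl fun l _ => ?_
        have hs : ∀ z : F, c • z = (c : F) * z := fun z => rfl
        rw [hs, hs, mul_pow, hfq]
        ring } with hφdef
  have hφapp : ∀ x : F, φ x = ∑ l : Fin Jt, w l * x ^ q ^ (l : ℕ) := fun x => rfl
  -- the linear combination map
  set ψ : (Fin J → Fq) →ₗ[Fq] F := Fintype.linearCombination Fq θ with hψdef
  have hψapp : ∀ g : Fin J → Fq, ψ g = ∑ i, g i • θ i := fun g => rfl
  have hψinj : Function.Injective ψ := by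
    rw [← LinearMap.ker_eq_bot, LinearMap.ker_eq_bot']
    intro g hg
    funext i
    exact Fintype.linearIndependent_iff.mp hθ g hg i
  set G' : Matrix (Fin J) {p : Fin n × Fin α // p.1 ∈ S} Fq :=
    G.submatrix id (fun p : {p : Fin n × Fin α // p.1 ∈ S} => (p : Fin n × Fin α)) with hG'def
  set Csub : Submodule Fq (Fin J → Fq) := LinearMap.range G'.mulVecLin with hCdef
  have hrank : Module.finrank Fq Csub = thickRank G S := rfl
  set V : Submodule Fq F := Csub.map ψ with hVdef
  have hfinV : Module.finrank Fq Csub = Module.finrank Fq V :=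
    LinearEquiv.finrank_eq (Submodule.equivMapOfInjective ψ hψinj Csub)
  -- V is contained in the kernel of φ
  have hker : ∀ x ∈ V, φ x = 0 := by
    rintro x hx
    obtain ⟨y, hy, rfl⟩ := hx
    obtain ⟨z, rfl⟩ := hy
    have hstep : ψ (G'.mulVecLin z) = ∑ pp : {p : Fin n × Fin α // p.1 ∈ S},
        z pp • ψ (fun i => G' i pp) := by
      simp only [hψapp, Matrix.mulVecLin_apply, Matrix.mulVec, dotProduct,
        Finset.sum_smul, Finset.smul_sum]
      rw [Finset.sum_comm]
      refine Finset.sum_congr rfl fun pp _ => Finset.sum_congr rfl fun i _ => ?_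
      rw [mul_comm, mul_smul]
    rw [hstep, map_sum]
    refine Finset.sum_eq_zero fun pp _ => ?_
    rw [map_smul]
    have hβ : φ (ψ (fun i => G' i pp)) = 0 := by
      rw [hψapp, hφapp]
      have hexp : ∀ l : Fin Jt, (∑ i, (G' i pp) • θ i) ^ q ^ (l : ℕ)
          = ∑ i, (G' i pp : F) * θ i ^ q ^ (l : ℕ) := by
        intro l
        rw [hfrob]
        refine Finset.sum_congr rfl fun i _ => ?_
        have hs : (G' i pp) • θ i = (G' i pp : F) * θ i := rfl
        rw [hs, mul_pow, hfq]
      simp only [hexp, Finset.mul_sum]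
      rw [Finset.sum_comm]
      have hterm : ∀ i, (∑ l : Fin Jt, w l * ((G' i pp : F) * θ i ^ q ^ (l : ℕ)))
          = (∑ l : Fin Jt, u l * θ i ^ q ^ (l : ℕ)) * (G i (pp : Fin n × Fin α) : F)
            - (∑ l : Fin Jt, v l * θ i ^ q ^ (l : ℕ)) * (G i (pp : Fin n × Fin α) : F) := by
        intro i
        rw [← sub_mul, ← Finset.sum_sub_distrib, Finset.sum_mul]
        refine Finset.sum_congr rfl fun l _ => ?_
        have hwl : w l = u l - v l := rfl
        have hG : (G' i pp : F) = (G i (pp : Fin n × Fin α) : F) := rfl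
        rw [hwl, hG]
        ring
      simp only [hterm]
      rw [Finset.sum_sub_distrib, ← henc u, ← henc v]
      have : enc u (pp : Fin n × Fin α) = enc v (pp : Fin n × Fin α) := by
        obtain ⟨⟨j, a⟩, hj⟩ := pp
        exact hcon j hj a
      rw [this, sub_self]
    rw [hβ, smul_zero]
  -- dimension of V
  have hdimV : Jt ≤ Module.finrank Fq V := by
    rw [← hfinV, hrank]; exact hS
  -- the polynomial
  set f : Polynomial F := ∑ l : Fin Jt, Polynomial.C (w l) * Polynomial.X ^ (q ^ (l : ℕ))
    with hfdef
  have hf0 : f ≠ 0 := by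
    obtain ⟨l0, hl0⟩ := Function.ne_iff.mp hw
    intro hf
    apply hl0
    have : f.coeff (q ^ (l0 : ℕ)) = w l0 := by
      rw [hfdef, Polynomial.finset_sum_coeff]
      rw [Finset.sum_eq_single l0]
      · simp
      · intro l _ hne
        have : q ^ (l0 : ℕ) ≠ q ^ (l : ℕ) := by
          intro h
          exact hne (Fin.ext ((Nat.pow_right_injective hq2 h).symm))
        simp [Polynomial.coeff_X_pow, this]
      · simp
    rw [hf] at this
    simpa using this.symm
  have hdeg : f.natDegree ≤ q ^ (Jt - 1) := by
    refine Polynomial.natDegree_sum_le_of_forall_le _ _ fun l _ => ?_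
    refine (Polynomial.natDegree_C_mul_X_pow_le _ _).trans ?_
    exact Nat.pow_le_pow_right (by omega) (by omega)
  -- roots
  have hroots : ∀ x ∈ V, x ∈ f.roots.toFinset := by
    intro x hx
    rw [Multiset.mem_toFinset, Polynomial.mem_roots hf0]
    have : f.eval x = φ x := by
      rw [hφapp, hfdef]
      simp [Polynomial.eval_finset_sum]
    exact (this.trans (hker x hx))
  -- counting
  haveI : FiniteDimensional Fq F := FiniteDimensional.of_finrank_pos (by omega)
  haveI : Module.Finite Fq V := inferInstance
  haveI : Finite V := Module.finite_of_finite (R := Fq)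
  haveI : Fintype V := Fintype.ofFinite V
  have hcardV : Fintype.card V = q ^ (Module.finrank Fq V) := by
    rw [← hcard]; exact Module.card_eq_pow_finrank
  have hle1 : q ^ Jt ≤ Fintype.card V := by
    rw [hcardV]; exact Nat.pow_le_pow_right (by omega) hdimV
  have hle2 : Fintype.card V ≤ f.roots.toFinset.card := by
    have hinj : Function.Injective
        (fun x : V => (⟨(x : F), hroots x x.2⟩ : {y // y ∈ f.roots.toFinset})) := by
      intro a b hab
      have h2 : ((⟨(a : F), hroots a a.2⟩ : {y // y ∈ f.roots.toFinset}) : F)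
          = ((⟨(b : F), hroots b b.2⟩ : {y // y ∈ f.roots.toFinset}) : F) :=
        congrArg Subtype.val hab
      exact Subtype.ext h2
    simpa [Fintype.card_coe] using Fintype.card_le_of_injective _ hinj
  have hle3 : f.roots.toFinset.card ≤ f.natDegree :=
    (Multiset.toFinset_card_le _).trans (f.card_roots')
  have hlt : q ^ (Jt - 1) < q ^ Jt := Nat.pow_lt_pow_right (by omega) (by omega)
  omega
end

section
/- Let F_q be a finite field, let n_L, α, t be positive integers, let a_1 ≥ a_2 ≥ … ≥ a_{n_L} ≥ 0 be integers with K_L := P(n_L) ≥ 1, and let B be a K_L × (n_L·α) URA matrix over F_q with profile (a_1,…,a_{n_L}). Let G_BASIC be the (t·K_L) × (t·n_L·α) block-diagonal matrix with t diagonal copies of B, its t·n_L thick columns of width α being those of the copies of B. Then for every 0 ≤ s ≤ t·n_L, the minimum of rank(G_BASIC|_T) over all subsets T of s thick columns equals P(s), where P uses the period-n_L periodic extension of the profile. Equivalently, for every 1 ≤ K ≤ t·K_L, the smallest integer ρ such that every set of ρ thick columns of G_BASIC has rank at least K is ρ = P^{inv}(K). -/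
/-- Partial sums `P(s) = a_1 + … + a_s` of a (0-indexed) sequence `a : ℕ → ℕ`. -/
def Pfun (a : ℕ → ℕ) (s : ℕ) : ℕ := ∑ i ∈ Finset.range s, a i

/-- `Pinv ν` is the smallest integer `s` with `P(s) ≥ ν`. -/
noncomputable def Pinv (a : ℕ → ℕ) (ν : ℕ) : ℕ := sInf {s : ℕ | ν ≤ Pfun a s}

/-! ### Auxiliary linear algebra: rank of block-diagonal matrices -/

section BlockDiag

variable {K : Type*} [Field K]

/-- `Submodule.pi Set.univ p` is linearly equivalent to the direct product of the `p i`. -/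
noncomputable def piSubmoduleEquiv {ι : Type*} {φ : ι → Type*}
    [∀ i, AddCommGroup (φ i)] [∀ i, Module K (φ i)] (p : ∀ i, Submodule K (φ i)) :
    (Submodule.pi Set.univ p) ≃ₗ[K] Π i, p i where
  toFun x i := ⟨x.1 i, x.2 i (Set.mem_univ i)⟩
  map_add' _ _ := rfl
  map_smul' _ _ := rfl
  invFun x := ⟨fun i => x i, fun i _ => (x i).2⟩
  left_inv _ := rfl
  right_inv _ := rfl

lemma finrank_pi_submodule {ι : Type*} [Fintype ι] {φ : ι → Type*}
    [∀ i, AddCommGroup (φ i)] [∀ i, Module K (φ i)] (p : ∀ i, Submodule K (φ i))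
    [∀ i, Module.Finite K (p i)] :
    Module.finrank K (Submodule.pi Set.univ p) = ∑ i, Module.finrank K (p i) := by
  rw [(piSubmoduleEquiv p).finrank_eq, Module.finrank_pi_fintype]

lemma range_pi_comp_proj {ι : Type*} {φ ψ : ι → Type*}
    [∀ i, AddCommGroup (φ i)] [∀ i, Module K (φ i)]
    [∀ i, AddCommGroup (ψ i)] [∀ i, Module K (ψ i)]
    (f : ∀ i, φ i →ₗ[K] ψ i) :
    LinearMap.range (LinearMap.pi (fun i => (f i).comp (LinearMap.proj i))) =
      Submodule.pi Set.univ (fun i => LinearMap.range (f i)) := by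
  ext x
  constructor
  · rintro ⟨v, rfl⟩ i _
    exact ⟨v i, rfl⟩
  · intro h
    choose w hw using fun i => h i (Set.mem_univ i)
    exact ⟨w, funext hw⟩

lemma rank_blockDiagonal'' {ι : Type*} [Fintype ι] [DecidableEq ι]
    {m n : ι → Type*} [∀ i, Fintype (m i)] [∀ i, Fintype (n i)]
    (M : ∀ i, Matrix (m i) (n i) K) :
    (Matrix.blockDiagonal' M).rank = ∑ i, (M i).rank := by
  classical
  set F : (Π i, n i → K) →ₗ[K] (Π i, m i → K) :=
    LinearMap.pi (fun i => (M i).mulVecLin.comp (LinearMap.proj i)) with hF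
  have key : (Matrix.blockDiagonal' M).mulVecLin =
      ((LinearEquiv.piCurry K (fun (i : ι) (_ : m i) => K)).symm.toLinearMap.comp
        (F.comp (LinearEquiv.piCurry K (fun (i : ι) (_ : n i) => K)).toLinearMap)) := by
    apply LinearMap.ext
    intro v
    funext ik
    obtain ⟨i, r⟩ := ik
    show (Matrix.blockDiagonal' M).mulVec v ⟨i, r⟩ = _
    rw [Matrix.mulVec, dotProduct]
    rw [← Finset.univ_sigma_univ, Finset.sum_sigma]
    rw [Finset.sum_eq_single i]
    · simp only [Matrix.blockDiagonal'_apply_eq]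
      rfl
    · intro b _ hb
      apply Finset.sum_eq_zero
      intro j _
      rw [Matrix.blockDiagonal'_apply_ne M _ _ (Ne.symm hb), zero_mul]
    · simp
  rw [Matrix.rank, key]
  rw [LinearMap.range_comp, LinearMap.range_comp, LinearEquiv.range, Submodule.map_top,
    LinearEquiv.finrank_map_eq, hF, range_pi_comp_proj]
  rw [finrank_pi_submodule]
  rfl

/-- rank is invariant under reindexing by equivs, rectangular version. -/
lemma rank_reindex_rect {m m' n n' : Type*} [Fintype n] [Fintype n']
    (e₁ : m ≃ m') (e₂ : n ≃ n') (A : Matrix m n K) :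
    (Matrix.reindex e₁ e₂ A).rank = A.rank := by
  rw [Matrix.rank, Matrix.rank, Matrix.mulVecLin_reindex, LinearMap.range_comp,
    LinearMap.range_comp, LinearEquiv.range, Submodule.map_top, LinearEquiv.finrank_map_eq]

lemma rank_submatrix_equiv {m m' n n' : Type*} [Fintype n] [Fintype n']
    (e₁ : m' ≃ m) (e₂ : n' ≃ n) (A : Matrix m n K) :
    (A.submatrix e₁ e₂).rank = A.rank := by
  have := rank_reindex_rect e₁.symm e₂.symm A
  simpa [Matrix.reindex_apply] using this

variable {t nL KL α : ℕ}

/-- The fiber of a set of thick columns over the `b`-th diagonal block. -/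
def Tb (T : Finset (Fin t × Fin nL)) (b : Fin t) : Finset (Fin nL) :=
  (T.filter (fun p => p.1 = b)).image Prod.snd

lemma mem_Tb {T : Finset (Fin t × Fin nL)} {b : Fin t} {j : Fin nL} :
    j ∈ Tb T b ↔ (b, j) ∈ T := by
  simp only [Tb, Finset.mem_image, Finset.mem_filter]
  constructor
  · rintro ⟨⟨b', j'⟩, ⟨hp, rfl⟩, rfl⟩; exact hp
  · intro h; exact ⟨(b, j), ⟨h, rfl⟩, rfl⟩

lemma card_Tb (T : Finset (Fin t × Fin nL)) (b : Fin t) :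
    (Tb T b).card = (T.filter (fun p => p.1 = b)).card := by
  apply Finset.card_image_of_injOn
  intro p1 h1 p2 h2 he
  simp only [Finset.coe_filter, Set.mem_setOf_eq] at h1 h2
  exact Prod.ext (h1.2.trans h2.2.symm) he

lemma card_eq_sum_card_Tb (T : Finset (Fin t × Fin nL)) :
    T.card = ∑ b : Fin t, (Tb T b).card := by
  simp only [card_Tb]
  exact Finset.card_eq_sum_card_fiberwise (fun p _ => Finset.mem_univ p.1)

lemma thickRank_blockdiag (B : Matrix (Fin KL) (Fin nL × Fin α) K)
    (G : Matrix (Fin t × Fin KL) ((Fin t × Fin nL) × Fin α) K)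
    (hG : ∀ b i b' j c, G (b, i) ((b', j), c) = if b = b' then B i (j, c) else 0)
    (T : Finset (Fin t × Fin nL)) :
    thickRank G T = ∑ b : Fin t, thickRank B (Tb T b) := by
  classical
  set D : ∀ b : Fin t, Matrix (Fin KL) {q : Fin nL × Fin α // q.1 ∈ Tb T b} K :=
    fun b => B.submatrix id (fun q => (q : Fin nL × Fin α)) with hD
  let e : {p : (Fin t × Fin nL) × Fin α // p.1 ∈ T} ≃
      Σ b : Fin t, {q : Fin nL × Fin α // q.1 ∈ Tb T b} :=
    { toFun := fun p => ⟨p.1.1.1, ⟨(p.1.1.2, p.1.2), mem_Tb.2 (by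
        have h := p.2; simpa using h)⟩⟩
      invFun := fun x => ⟨((x.1, x.2.1.1), x.2.1.2), mem_Tb.1 x.2.2⟩
      left_inv := by rintro ⟨⟨⟨b, j⟩, c⟩, h⟩; rfl
      right_inv := by rintro ⟨b, ⟨⟨j, c⟩, h⟩⟩; rfl }
  have hmat : G.submatrix id (fun p : {p : (Fin t × Fin nL) × Fin α // p.1 ∈ T}
        => (p : (Fin t × Fin nL) × Fin α)) =
      (Matrix.blockDiagonal' D).submatrix (Equiv.sigmaEquivProd (Fin t) (Fin KL)).symm e := by
    ext ⟨b, i⟩ ⟨⟨⟨b', j⟩, c⟩, h⟩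
    show G (b, i) ((b', j), c) = Matrix.blockDiagonal' D ⟨b, i⟩ ⟨b', _⟩
    rcases eq_or_ne b b' with rfl | hne
    · rw [Matrix.blockDiagonal'_apply_eq, hG]
      simp [hD]
    · rw [Matrix.blockDiagonal'_apply_ne D _ _ hne, hG, if_neg hne]
  rw [thickRank, hmat, rank_submatrix_equiv, rank_blockDiagonal'']
  rfl

end BlockDiag

/-! ### Auxiliary arithmetic on periodic partial sums -/

section Arith
variable {nL : ℕ} {a : ℕ → ℕ} (hnL : 0 < nL) (hper : ∀ i, a (i + nL) = a i)
  (hmono : ∀ i j, i ≤ j → j < nL → a j ≤ a i)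

lemma Pfun_mono {a : ℕ → ℕ} : Monotone (Pfun a) := fun _ _ h =>
  Finset.sum_le_sum_of_subset (Finset.range_subset_range.2 h)

include hper in
lemma a_add_mul (q m : ℕ) : a (m + q * nL) = a m := by
  induction q with
  | zero => simp
  | succ q ih => rw [Nat.succ_mul, ← Nat.add_assoc, hper, ih]

include hper in
lemma a_mod (m : ℕ) : a m = a (m % nL) := by
  conv_lhs => rw [← Nat.mod_add_div' m nL]
  rw [a_add_mul hper]

include hper in
lemma shift_period_sum (x : ℕ) : ∑ j ∈ Finset.range nL, a (x + j) = Pfun a nL := by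
  induction x with
  | zero => simp [Pfun]
  | succ x ih =>
    have e1 : ∑ j ∈ Finset.range (nL + 1), a (x + j)
        = ∑ j ∈ Finset.range nL, a (x + 1 + j) + a (x + 0) := by
      rw [Finset.sum_range_succ']
      congr 1
      exact Finset.sum_congr rfl fun j _ => by congr 1; omega
    have e2 : ∑ j ∈ Finset.range (nL + 1), a (x + j)
        = ∑ j ∈ Finset.range nL, a (x + j) + a (x + nL) := Finset.sum_range_succ _ _
    have := hper x
    simp only [Nat.add_zero] at e1
    omega

include hper in
lemma Pfun_add_period (x : ℕ) : Pfun a (x + nL) = Pfun a x + Pfun a nL := by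
  rw [Pfun, Finset.sum_range_add, shift_period_sum hper]; rfl

include hper in
lemma Pfun_mul_add (q r : ℕ) : Pfun a (q * nL + r) = q * Pfun a nL + Pfun a r := by
  induction q with
  | zero => simp
  | succ q ih =>
    have : (q + 1) * nL + r = (q * nL + r) + nL := by ring
    rw [this, Pfun_add_period hper, ih]; ring

lemma strictMono_le_apply {r : ℕ} {f : Fin r → ℕ} (hf : StrictMono f) (i : Fin r) :
    (i : ℕ) ≤ f i := by
  obtain ⟨k, hk⟩ := i
  induction k with
  | zero => exact Nat.zero_le _
  | succ k ih =>
    have hk' : k < r := by omega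
    have h1 : f ⟨k, hk'⟩ < f ⟨k + 1, hk⟩ := hf (by simp [Fin.lt_def])
    have h2 := ih hk'
    simp only at h2 ⊢
    omega

include hmono in
lemma sum_subset_le (S : Finset ℕ) (hS : S ⊆ Finset.range nL) :
    ∑ i ∈ S, a i ≤ Pfun a S.card := by
  classical
  set r := S.card with hr
  let g := S.orderIsoOfFin hr.symm
  have hg : StrictMono fun i : Fin r => ((g i : ℕ)) := fun i j hij => by
    exact_mod_cast (g.lt_iff_lt.2 hij)
  have hsum : ∑ i ∈ S, a i = ∑ i : Fin r, a (g i) := by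
    rw [← Finset.sum_attach S (fun i => a i)]
    exact (Fintype.sum_equiv g.toEquiv _ _ fun i => rfl).symm
  rw [hsum, Pfun, ← Fin.sum_univ_eq_sum_range]
  apply Finset.sum_le_sum
  intro i _
  exact hmono i (g i) (strictMono_le_apply hg i)
    (Finset.mem_range.1 (hS (g i).2))

include hnL hper hmono in
lemma shift_sum_le (x r : ℕ) (hr : r ≤ nL) :
    ∑ j ∈ Finset.range r, a (x + j) ≤ Pfun a r := by
  classical
  set f : ℕ → ℕ := fun j => (x + j) % nL with hf
  have hinj : Set.InjOn f (Finset.range r) := by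
    intro j1 h1 j2 h2 he
    simp only [Finset.coe_range, Set.mem_Iio] at h1 h2
    simp only [hf] at he
    have hme : j1 % nL = j2 % nL := Nat.ModEq.add_left_cancel' x he
    rwa [Nat.mod_eq_of_lt (by omega), Nat.mod_eq_of_lt (by omega)] at hme
  have h1 : ∑ j ∈ Finset.range r, a (x + j) = ∑ i ∈ (Finset.range r).image f, a i := by
    rw [Finset.sum_image fun x hx y hy h => hinj hx hy h]
    exact Finset.sum_congr rfl fun j _ => a_mod hper _
  rw [h1]
  have hcard : ((Finset.range r).image f).card = r := by
    rw [Finset.card_image_of_injOn hinj, Finset.card_range]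
  calc ∑ i ∈ (Finset.range r).image f, a i
      ≤ Pfun a ((Finset.range r).image f).card := by
        apply sum_subset_le hmono
        intro i hi
        simp only [Finset.mem_image] at hi
        obtain ⟨j, _, rfl⟩ := hi
        exact Finset.mem_range.2 (Nat.mod_lt _ hnL)
    _ = Pfun a r := by rw [hcard]

include hnL hper hmono in
lemma shift_sum_le' (x : ℕ) : ∀ y, ∑ j ∈ Finset.range y, a (x + j) ≤ Pfun a y := by
  intro y
  induction y using Nat.strong_induction_on with
  | _ y ih =>
    rcases le_or_gt y nL with h | h
    · exact shift_sum_le hnL hper hmono x y h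
    · obtain ⟨y', rfl⟩ : ∃ y', y = nL + y' := ⟨y - nL, by omega⟩
      rw [Finset.sum_range_add]
      have h1 : ∑ j ∈ Finset.range nL, a (x + j) = Pfun a nL := shift_period_sum hper x
      have h2 : ∑ j ∈ Finset.range y', a (x + (nL + j)) ≤ Pfun a y' := by
        have := ih y' (by omega)
        calc ∑ j ∈ Finset.range y', a (x + (nL + j))
            = ∑ j ∈ Finset.range y', a (x + j + nL) := by
              exact Finset.sum_congr rfl fun j _ => by congr 1; omega
          _ = ∑ j ∈ Finset.range y', a (x + j) := by
              exact Finset.sum_congr rfl fun j _ => hper _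
          _ ≤ Pfun a y' := this
      have h3 : Pfun a (nL + y') = Pfun a nL + Pfun a y' := by
        rw [Nat.add_comm nL y', Pfun_add_period hper]; omega
      omega

include hnL hper hmono in
lemma Pfun_subadd (x y : ℕ) : Pfun a (x + y) ≤ Pfun a x + Pfun a y := by
  rw [Pfun, Finset.sum_range_add]
  exact Nat.add_le_add_left (shift_sum_le' hnL hper hmono x y) _

include hnL hper hmono in
lemma Pfun_sum_le {ι : Type*} (s : Finset ι) (f : ι → ℕ) :
    Pfun a (∑ b ∈ s, f b) ≤ ∑ b ∈ s, Pfun a (f b) := by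
  classical
  induction s using Finset.induction_on with
  | empty => simp [Pfun]
  | insert _ _ hx ih =>
    rw [Finset.sum_insert hx, Finset.sum_insert hx]
    exact le_trans (Pfun_subadd hnL hper hmono _ _) (Nat.add_le_add_left ih _)

end Arith

/-! ### Small counting helpers -/

lemma filter_range_lt (n r : ℕ) :
    (Finset.range n).filter (fun j => j < r) = Finset.range (min r n) := by
  ext j
  simp only [Finset.mem_filter, Finset.mem_range]
  omega

lemma card_filter_val_lt (n r : ℕ) :
    (Finset.univ.filter fun j : Fin n => (j : ℕ) < r).card = min r n := by
  rw [Finset.card_filter, Fin.sum_univ_eq_sum_range (fun j => if j < r then 1 else 0),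
    ← Finset.card_filter, filter_range_lt, Finset.card_range]

lemma sum_step (t q u v : ℕ) (hq : q ≤ t) (hv : q = t → v = 0) :
    ∑ b ∈ Finset.range t, (if b < q then u else if b = q then v else 0) = q * u + v := by
  have hsplit : ∀ b, (if b < q then u else if b = q then v else 0) =
      (if b < q then u else 0) + (if b = q then v else 0) := by
    intro b; split_ifs <;> omega
  rw [Finset.sum_congr rfl fun b _ => hsplit b, Finset.sum_add_distrib]
  have h1 : ∑ b ∈ Finset.range t, (if b < q then u else 0) = q * u := by
    rw [← Finset.sum_filter, filter_range_lt, Finset.sum_const, Finset.card_range,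
      Nat.min_eq_left hq, smul_eq_mul]
  have h2 : ∑ b ∈ Finset.range t, (if b = q then v else 0) = v := by
    rw [Finset.sum_ite_eq' (Finset.range t) q (fun _ => v)]
    rcases lt_or_eq_of_le hq with h | h
    · rw [if_pos (Finset.mem_range.2 h)]
    · rw [hv h]; simp
  rw [h1, h2]

theorem stmt_5 (nL α t : ℕ) (hnL : 0 < nL) (hα : 0 < α) (ht : 0 < t)
    (a : ℕ → ℕ) (hper : ∀ i, a (i + nL) = a i)
    (hmono : ∀ i j, i ≤ j → j < nL → a j ≤ a i)
    (hKL : 1 ≤ Pfun a nL)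
    (Fq : Type*) [Field Fq] [Fintype Fq]
    (B : Matrix (Fin (Pfun a nL)) (Fin nL × Fin α) Fq)
    (hB : ∀ S : Finset (Fin nL), thickRank B S = Pfun a S.card)
    (G : Matrix (Fin t × Fin (Pfun a nL)) ((Fin t × Fin nL) × Fin α) Fq)
    (hG : ∀ b i b' j c, G (b, i) ((b', j), c) = if b = b' then B i (j, c) else 0) :
    (∀ s : ℕ, s ≤ t * nL →
      (∀ T : Finset (Fin t × Fin nL), T.card = s → Pfun a s ≤ thickRank G T)
      ∧ (∃ T : Finset (Fin t × Fin nL), T.card = s ∧ thickRank G T = Pfun a s))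
    ∧ (∀ K : ℕ, 1 ≤ K → K ≤ t * Pfun a nL →
        IsLeast {ρ : ℕ | ∀ T : Finset (Fin t × Fin nL), T.card = ρ → K ≤ thickRank G T}
          (Pinv a K)) := by
  classical
  have hrank : ∀ T : Finset (Fin t × Fin nL),
      thickRank G T = ∑ b : Fin t, Pfun a (Tb T b).card := by
    intro T
    rw [thickRank_blockdiag B G hG T]
    exact Finset.sum_congr rfl fun b _ => hB _
  have hlow : ∀ T : Finset (Fin t × Fin nL), Pfun a T.card ≤ thickRank G T := by
    intro T
    rw [hrank, card_eq_sum_card_Tb T]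
    exact Pfun_sum_le hnL hper hmono _ _
  have hex : ∀ s, s ≤ t * nL →
      ∃ T : Finset (Fin t × Fin nL), T.card = s ∧ thickRank G T = Pfun a s := by
    intro s hs
    set q := s / nL with hq
    set r := s % nL with hr
    have hqr : q * nL + r = s := by
      rw [hq, hr, Nat.mul_comm]; exact Nat.div_add_mod s nL
    have hrlt : r < nL := Nat.mod_lt _ hnL
    have hqt : q ≤ t := by
      by_contra hcon
      push_neg at hcon
      have h1 : (t + 1) * nL ≤ q * nL := Nat.mul_le_mul_right nL (by omega)
      have h2 : (t + 1) * nL = t * nL + nL := by ring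
      omega
    have hv0 : q = t → r = 0 := by intro h; nlinarith [hqr, hrlt, hs]
    set T : Finset (Fin t × Fin nL) :=
      Finset.univ.filter (fun p => (p.1 : ℕ) < q ∨ ((p.1 : ℕ) = q ∧ (p.2 : ℕ) < r)) with hT
    have hTb : ∀ b : Fin t, (Tb T b).card =
        if (b : ℕ) < q then nL else if (b : ℕ) = q then r else 0 := by
      intro b
      have hTbeq : Tb T b = Finset.univ.filter
          (fun j : Fin nL => (b : ℕ) < q ∨ ((b : ℕ) = q ∧ (j : ℕ) < r)) := by
        ext j
        simp [mem_Tb, hT]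
      rw [hTbeq]
      by_cases h1 : (b : ℕ) < q
      · rw [if_pos h1]
        rw [Finset.filter_true_of_mem (fun j _ => Or.inl h1)]
        simp
      · rw [if_neg h1]
        by_cases h2 : (b : ℕ) = q
        · rw [if_pos h2]
          have : (Finset.univ.filter
              (fun j : Fin nL => (b : ℕ) < q ∨ ((b : ℕ) = q ∧ (j : ℕ) < r))) =
              (Finset.univ.filter (fun j : Fin nL => (j : ℕ) < r)) := by
            apply Finset.filter_congr
            intro j _
            simp [h1, h2]
          rw [this, card_filter_val_lt, Nat.min_eq_left (le_of_lt hrlt)]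
        · rw [if_neg h2]
          rw [Finset.filter_false_of_mem]
          · simp
          · intro j _
            simp [h1, h2]
    refine ⟨T, ?_, ?_⟩
    · rw [card_eq_sum_card_Tb T]
      rw [Finset.sum_congr rfl fun b _ => hTb b]
      rw [Fin.sum_univ_eq_sum_range
        (fun b => if b < q then nL else if b = q then r else 0)]
      rw [sum_step t q nL r hqt hv0]
      exact hqr
    · rw [hrank]
      have hpt : ∀ b : Fin t, Pfun a (Tb T b).card =
          if (b : ℕ) < q then Pfun a nL else if (b : ℕ) = q then Pfun a r else 0 := by
        intro b
        rw [hTb b]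
        split_ifs <;> simp [Pfun]
      rw [Finset.sum_congr rfl fun b _ => hpt b]
      rw [Fin.sum_univ_eq_sum_range
        (fun b => if b < q then Pfun a nL else if b = q then Pfun a r else 0)]
      rw [sum_step t q (Pfun a nL) (Pfun a r) hqt (fun h => by rw [hv0 h]; simp [Pfun])]
      rw [← hqr, Pfun_mul_add hper]
  constructor
  · intro s hs
    exact ⟨fun T hT => hT ▸ hlow T, hex s hs⟩
  · intro K hK1 hK2
    have hfull : Pfun a (t * nL) = t * Pfun a nL := by
      have := Pfun_mul_add hper (a := a) t 0
      simpa [Pfun] using this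
    have hmem : t * nL ∈ {s : ℕ | K ≤ Pfun a s} := by
      simp only [Set.mem_setOf_eq, hfull]
      exact hK2
    have hne : {s : ℕ | K ≤ Pfun a s}.Nonempty := ⟨t * nL, hmem⟩
    have hinf_mem : K ≤ Pfun a (Pinv a K) := Nat.sInf_mem hne
    constructor
    · intro T hT
      exact le_trans hinf_mem (hT ▸ hlow T)
    · intro ρ hρ
      apply Nat.sInf_le
      show K ≤ Pfun a ρ
      by_cases hρt : ρ ≤ t * nL
      · obtain ⟨T, hTc, hTr⟩ := hex ρ hρt
        have := hρ T hTc
        rwa [hTr] at this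
      · calc K ≤ Pfun a (t * nL) := by rw [hfull]; exact hK2
          _ ≤ Pfun a ρ := Pfun_mono (by omega)
end

section
/- Let r, α, β, n_L be positive integers with n_L ≥ r and α ≥ (r−1)β, and let (a_j) be the MBR rank accumulation profile with parameters (r, α, β, n_L), extended periodically with period n_L, so that K_L = P(n_L) = αr − C(r,2)β. Then for all integers v_1 ≥ 0 and 1 ≤ v_0 ≤ K_L, P^{inv}(v_1·K_L + v_0) = v_1·n_L + ν, where ν is the unique integer with 1 ≤ ν ≤ r satisfying α(ν−1) − C(ν−1,2)β < v_0 ≤ αν − C(ν,2)β. -/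
/-- Let `r, α, β, nL` be positive integers with `nL ≥ r` and
`α ≥ (r-1)β`, and let `a` be the MBR rank accumulation profile with parameters
`(r, α, β, nL)` extended periodically with period `nL` (0-indexed:
`a i = α - (i % nL)·β` if `i % nL < r`, and `a i = 0` otherwise), so that
`K_L = P(nL) = αr - C(r,2)β`.  Then for all integers `v_1 ≥ 0` and `1 ≤ v_0 ≤ K_L`,
`P^{inv}(v_1·K_L + v_0) = v_1·nL + ν`, where `ν` is the unique integer with `1 ≤ ν ≤ r`
satisfying `α(ν-1) - C(ν-1,2)β < v_0 ≤ αν - C(ν,2)β`. -/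
theorem stmt_7 (r α β nL : ℕ) (hr : 0 < r) (hα : 0 < α) (hβ : 0 < β)
    (hnLr : r ≤ nL) (hαβ : (r - 1) * β ≤ α)
    (a : ℕ → ℕ)
    (ha : ∀ i, a i = if i % nL < r then α - (i % nL) * β else 0) :
    Pfun a nL = α * r - Nat.choose r 2 * β
    ∧ (∀ v1 v0 : ℕ, 1 ≤ v0 → v0 ≤ α * r - Nat.choose r 2 * β →
      (∃! ν : ℕ, 1 ≤ ν ∧ ν ≤ r
          ∧ α * (ν - 1) - Nat.choose (ν - 1) 2 * β < v0
          ∧ v0 ≤ α * ν - Nat.choose ν 2 * β)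
      ∧ (∀ ν : ℕ, 1 ≤ ν → ν ≤ r →
          α * (ν - 1) - Nat.choose (ν - 1) 2 * β < v0 →
          v0 ≤ α * ν - Nat.choose ν 2 * β →
          Pinv a (v1 * (α * r - Nat.choose r 2 * β) + v0) = v1 * nL + ν)) := by
  have esucc : ∀ n, Pfun a (n + 1) = Pfun a n + a n := fun n => Finset.sum_range_succ a n
  have hmono : Monotone (Pfun a) := fun s t h =>
    Finset.sum_le_sum_of_subset (Finset.range_subset_range.2 h)
  -- key closed form for partial sums up to r
  have hkey : ∀ ν, ν ≤ r →
      Nat.choose ν 2 * β ≤ α * ν ∧ Pfun a ν = α * ν - Nat.choose ν 2 * β := by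
    intro ν
    induction ν with
    | zero => intro _; simp [Pfun]
    | succ n ih =>
      intro hn
      obtain ⟨h1, h2⟩ := ih (Nat.le_of_succ_le hn)
      have hnβ : n * β ≤ α :=
        le_trans (Nat.mul_le_mul_right β (by omega : n ≤ r - 1)) hαβ
      have hc2 : Nat.choose (n + 1) 2 = Nat.choose n 2 + n := by
        rw [Nat.choose_succ_succ, Nat.choose_one_right, Nat.add_comm]
      have hB1 : Nat.choose (n + 1) 2 * β ≤ α * (n + 1) := by
        calc Nat.choose (n + 1) 2 * β = Nat.choose n 2 * β + n * β := by rw [hc2]; ring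
          _ ≤ α * n + α := add_le_add h1 hnβ
          _ = α * (n + 1) := by ring
      refine ⟨hB1, ?_⟩
      have han : a n = α - n * β := by
        rw [ha]
        have hmod : n % nL = n := Nat.mod_eq_of_lt (by omega)
        rw [hmod, if_pos (by omega : n < r)]
      rw [esucc, h2, han, hc2]
      have h3 : (Nat.choose n 2 + n) * β ≤ α * (n + 1) := by rw [← hc2]; exact hB1
      zify [h1, hnβ, h3]
      ring
  have hPr : Pfun a r = α * r - Nat.choose r 2 * β := (hkey r le_rfl).2
  -- partial sums are constant between r and nL
  have hstep : ∀ m, r + m ≤ nL → Pfun a (r + m) = Pfun a r := by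
    intro m
    induction m with
    | zero => intro _; rfl
    | succ n ih =>
      intro h
      have h' : r + n ≤ nL := by omega
      have h0 : a (r + n) = 0 := by
        rw [ha]
        have hmod : (r + n) % nL = r + n := Nat.mod_eq_of_lt (by omega)
        rw [hmod, if_neg (by omega)]
      rw [show r + (n + 1) = (r + n) + 1 by ring, esucc, ih h', h0]
      ring
  have hKnL : Pfun a nL = α * r - Nat.choose r 2 * β := by
    have h := hstep (nL - r) (by omega)
    rw [show r + (nL - r) = nL by omega] at h
    rw [h, hPr]
  -- periodicity
  have hper : ∀ m, Pfun a (nL + m) = Pfun a nL + Pfun a m := by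
    intro m
    induction m with
    | zero => simp [Pfun]
    | succ n ih =>
      have haa : a (nL + n) = a n := by rw [ha, ha, Nat.add_mod_left]
      rw [show nL + (n + 1) = (nL + n) + 1 by ring, esucc, ih, haa, esucc]
      ring
  have hmulP : ∀ v1 t, Pfun a (v1 * nL + t) = v1 * Pfun a nL + Pfun a t := by
    intro v1
    induction v1 with
    | zero => intro t; simp
    | succ n ih =>
      intro t
      rw [show (n + 1) * nL + t = nL + (n * nL + t) by ring, hper, ih]
      ring
  refine ⟨hKnL, ?_⟩
  intro v1 v0 hv01 hv0K
  -- existence of ν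
  set S : Set ℕ := {k | v0 ≤ Pfun a k} with hSdef
  have hrS : r ∈ S := by simp only [hSdef, Set.mem_setOf_eq, hPr]; exact hv0K
  have hne : S.Nonempty := ⟨r, hrS⟩
  set ν₀ := sInf S with hν₀def
  have hν₀mem : v0 ≤ Pfun a ν₀ := Nat.sInf_mem hne
  have hν₀r : ν₀ ≤ r := Nat.sInf_le hrS
  have hν₀pos : 1 ≤ ν₀ := by
    by_contra h
    have h0 : ν₀ = 0 := by omega
    rw [h0] at hν₀mem
    simp [Pfun] at hν₀mem
    omega
  have hlt : Pfun a (ν₀ - 1) < v0 := by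
    by_contra h
    push_neg at h
    have := Nat.sInf_le (show ν₀ - 1 ∈ S from h)
    omega
  have hP₀ : Pfun a ν₀ = α * ν₀ - Nat.choose ν₀ 2 * β := (hkey ν₀ hν₀r).2
  have hP₁ : Pfun a (ν₀ - 1) = α * (ν₀ - 1) - Nat.choose (ν₀ - 1) 2 * β :=
    (hkey (ν₀ - 1) (by omega)).2
  constructor
  · refine ⟨ν₀, ⟨hν₀pos, hν₀r, by rw [← hP₁]; exact hlt, by rw [← hP₀]; exact hν₀mem⟩, ?_⟩
    intro ν' ⟨h1', h2', h3', h4'⟩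
    rcases lt_trichotomy ν' ν₀ with h | h | h
    · exfalso
      have hPν' : Pfun a ν' = α * ν' - Nat.choose ν' 2 * β := (hkey ν' h2').2
      have : Pfun a ν' ≤ Pfun a (ν₀ - 1) := hmono (by omega)
      rw [hPν'] at this
      omega
    · exact h
    · exfalso
      have hPν' : Pfun a (ν' - 1) = α * (ν' - 1) - Nat.choose (ν' - 1) 2 * β :=
        (hkey (ν' - 1) (by omega)).2
      have : Pfun a ν₀ ≤ Pfun a (ν' - 1) := hmono (by omega)
      rw [hPν'] at this
      omega
  · intro ν h1 h2 h3 h4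
    have hPν : Pfun a ν = α * ν - Nat.choose ν 2 * β := (hkey ν h2).2
    have hPν1 : Pfun a (ν - 1) = α * (ν - 1) - Nat.choose (ν - 1) 2 * β :=
      (hkey (ν - 1) (by omega)).2
    have hv0Pν : v0 ≤ Pfun a ν := by rw [hPν]; exact h4
    have hPν1lt : Pfun a (ν - 1) < v0 := by rw [hPν1]; exact h3
    have hmem : v1 * (α * r - Nat.choose r 2 * β) + v0 ≤ Pfun a (v1 * nL + ν) := by
      rw [hmulP, hKnL]
      exact Nat.add_le_add_left hv0Pν _
    have hlow : ∀ s ∈ {s : ℕ | v1 * (α * r - Nat.choose r 2 * β) + v0 ≤ Pfun a s},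
        v1 * nL + ν ≤ s := by
      intro s hs
      by_contra hcon
      push_neg at hcon
      have hs' : s ≤ v1 * nL + (ν - 1) := by omega
      have hPs : Pfun a s ≤ v1 * (α * r - Nat.choose r 2 * β) + Pfun a (ν - 1) := by
        have := hmono hs'
        rwa [hmulP, hKnL] at this
      have hlt2 : Pfun a s < v1 * (α * r - Nat.choose r 2 * β) + v0 :=
        lt_of_le_of_lt hPs (Nat.add_lt_add_left hPν1lt _)
      exact absurd hs (not_le.mpr hlt2)
    exact le_antisymm (Nat.sInf_le hmem) (le_csInf ⟨_, hmem⟩ hlow)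
end

section
/- (Note after Theorem 2: file-size optimality) Let r, α, β, n_L, t be positive integers with n_L ≥ r and α ≥ (r−1)β, let (a_j) be the MBR rank accumulation profile with parameters (r, α, β, n_L), extended periodically with period n_L, and set K_L = αr − C(r,2)β and n = t·n_L. Suppose K = v_1·K_L + v_0 with integers v_1 ≥ 0 and 1 ≤ v_0 ≤ K_L, where v_0 = να − C(ν,2)β for some integer 1 ≤ ν ≤ r, and K ≤ t·K_L. Then P(P^{inv}(K)) = K; equivalently, setting d_min := n − P^{inv}(K) + 1 (the minimum distance achieved by Construction 1), one has K = P(n − d_min + 1), i.e., the constructed code achieves the file-size bound K ≤ P(n − d_min + 1) with equality. -/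
/-- **Note after Theorem 2: file-size optimality.**  Let `r, α, β, nL, t` be
positive integers with `nL ≥ r` and `α ≥ (r-1)β`, let `a` be the MBR rank accumulation
profile with parameters `(r, α, β, nL)` extended periodically with period `nL` (0-indexed:
`a i = α - (i % nL)·β` if `i % nL < r`, else `0`), and set `K_L = αr - C(r,2)β` and
`n = t·nL`.  Suppose `K = v_1·K_L + v_0` with integers `v_1 ≥ 0`, `1 ≤ v_0 ≤ K_L`, where
`v_0 = να - C(ν,2)β` for some integer `1 ≤ ν ≤ r`, and `K ≤ t·K_L`.  Then
`P(P^{inv}(K)) = K`; equivalently, setting `d_min := n - P^{inv}(K) + 1` (the minimum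
distance achieved by Construction 1), one has `K = P(n - d_min + 1)`, i.e. the constructed
code achieves the file-size bound `K ≤ P(n - d_min + 1)` with equality. -/
theorem stmt_10 (r α β nL t : ℕ) (hr : 0 < r) (hα : 0 < α) (hβ : 0 < β) (ht : 0 < t)
    (hnLr : r ≤ nL) (hαβ : (r - 1) * β ≤ α)
    (a : ℕ → ℕ)
    (ha : ∀ i, a i = if i % nL < r then α - (i % nL) * β else 0)
    (K v1 v0 ν : ℕ)
    (hv0l : 1 ≤ v0) (hv0u : v0 ≤ α * r - Nat.choose r 2 * β)
    (hν1 : 1 ≤ ν) (hνr : ν ≤ r)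
    (hv0 : v0 = ν * α - Nat.choose ν 2 * β)
    (hKdef : K = v1 * (α * r - Nat.choose r 2 * β) + v0)
    (hKle : K ≤ t * (α * r - Nat.choose r 2 * β)) :
    Pfun a (Pinv a K) = K
    ∧ K = Pfun a (t * nL - (t * nL - Pinv a K + 1) + 1) := by
  have hnL : 0 < nL := lt_of_lt_of_le hr hnLr
  -- additive key lemma
  have key : ∀ m, m ≤ r → Pfun a m + Nat.choose m 2 * β = m * α := by
    intro m
    induction m with
    | zero => intro _; simp [Pfun]
    | succ k ih =>
      intro hk
      have hk' : k ≤ r := Nat.le_of_succ_le hk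
      have hkβ : k * β ≤ α := le_trans (Nat.mul_le_mul_right _ (by omega)) hαβ
      have hak : a k = α - k * β := by
        rw [ha, Nat.mod_eq_of_lt (lt_of_lt_of_le hk hnLr)]
        simp [show k < r from hk]
      have hih := ih hk'
      have hch : Nat.choose (k+1) 2 = Nat.choose k 2 + k := by
        rw [Nat.choose_succ_succ, Nat.choose_one_right, Nat.add_comm]
      rw [Pfun, Finset.sum_range_succ, ← Pfun, hak, hch]
      have e1 : (Nat.choose k 2 + k) * β = Nat.choose k 2 * β + k * β := Nat.add_mul _ _ _
      have e2 : (k + 1) * α = k * α + α := Nat.succ_mul _ _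
      rw [e1, e2]
      omega
  have hClerν : Nat.choose ν 2 * β ≤ ν * α := by
    have := key ν hνr; omega
  have hCler : Nat.choose r 2 * β ≤ r * α := by
    have := key r le_rfl; omega
  have hPν : Pfun a ν = v0 := by have := key ν hνr; omega
  have hKLval : Pfun a nL = α * r - Nat.choose r 2 * β := by
    have hsplit : Pfun a nL = Pfun a r + ∑ i ∈ Finset.range (nL - r), a (r + i) := by
      have h1 : Pfun a nL = Pfun a (r + (nL - r)) := by
        congr 1; omega
      rw [h1, Pfun, Finset.sum_range_add, ← Pfun]
    have hzero : ∀ i ∈ Finset.range (nL - r), a (r + i) = 0 := by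
      intro i hi
      simp only [Finset.mem_range] at hi
      rw [ha, Nat.mod_eq_of_lt (by omega)]
      simp [show ¬ (r + i < r) from by omega]
    rw [hsplit, Finset.sum_eq_zero hzero]
    have := key r le_rfl
    have : Pfun a r = r * α - Nat.choose r 2 * β := by omega
    rw [this]; ring_nf
  -- periodicity
  have hper : ∀ x, Pfun a (nL + x) = Pfun a nL + Pfun a x := by
    intro x
    rw [Pfun, Pfun, Pfun, Finset.sum_range_add]
    congr 1
    apply Finset.sum_congr rfl
    intro i _
    rw [ha, ha, Nat.add_mod_left]
  have hfull : ∀ j m, Pfun a (j * nL + m)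
      = j * (α * r - Nat.choose r 2 * β) + Pfun a m := by
    intro j
    induction j with
    | zero => simp
    | succ k ih =>
      intro m
      have : (k + 1) * nL + m = nL + (k * nL + m) := by ring
      rw [this, hper, ih, hKLval]
      ring
  -- monotonicity
  have hmono : ∀ s s', s ≤ s' → Pfun a s ≤ Pfun a s' := by
    intro s s' hss
    exact Finset.sum_le_sum_of_subset (Finset.range_subset_range.mpr hss)
  -- the witness point
  have hPs : Pfun a (v1 * nL + ν) = K := by
    rw [hfull, hPν, hKdef]
  have hPn : Pfun a (t * nL) = t * (α * r - Nat.choose r 2 * β) := by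
    have := hfull t 0
    simpa [Pfun] using this
  have hmemS : v1 * nL + ν ∈ {s : ℕ | K ≤ Pfun a s} := by
    simp only [Set.mem_setOf_eq, hPs, le_refl]
  have hmemN : t * nL ∈ {s : ℕ | K ≤ Pfun a s} := by
    simp only [Set.mem_setOf_eq, hPn]; exact hKle
  have hne : {s : ℕ | K ≤ Pfun a s}.Nonempty := ⟨_, hmemS⟩
  have hinf_mem : K ≤ Pfun a (Pinv a K) := Nat.sInf_mem hne
  have hle1 : Pinv a K ≤ v1 * nL + ν := Nat.sInf_le hmemS
  have hle2 : Pinv a K ≤ t * nL := Nat.sInf_le hmemN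
  have h1 : Pfun a (Pinv a K) ≤ K := le_trans (hmono _ _ hle1) (le_of_eq hPs)
  have hPinv : Pfun a (Pinv a K) = K := le_antisymm h1 hinf_mem
  have hK1 : 1 ≤ K := by omega
  have hne0 : Pinv a K ≠ 0 := by
    intro h
    rw [h] at hPinv
    simp [Pfun] at hPinv
    omega
  have heq : t * nL - (t * nL - Pinv a K + 1) + 1 = Pinv a K := by omega
  exact ⟨hPinv, by rw [heq, hPinv]⟩
end

section
/- (Theorem 3, information locality construction) Let q be a prime power, F_q the field with q elements, and F an extension of F_q of degree m. Let n_L, α, t, Δ, K be positive integers, let a_1 ≥ … ≥ a_{n_L} ≥ 0 be integers with K_L := P(n_L) ≥ 1, and assume K ≤ t·K_L and m ≥ t·K_L + Δ·α. Let B be a K_L × (n_L·α) URA matrix over F_q with profile (a_1,…,a_{n_L}), and let G be the (t·K_L + Δα) × (t·n_L·α + Δα) block-diagonal matrix whose first t diagonal blocks are copies of B and whose last diagonal block is the (Δα) × (Δα) identity matrix; G has n := t·n_L + Δ thick columns of width α (the last Δ thick columns coming from the identity block). Let θ_1,…,θ_{tK_L+Δα} ∈ F be linearly independent over F_q, and let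 C ⊆ F^{nα} consist of all vectors (f(θ_1),…,f(θ_{tK_L+Δα}))·G, where f ranges over linearized polynomials of q-degree at most K−1 over F. Then the encoding map is injective and the minimum thick Hamming distance of C, viewed as a length-n code over the alphabet F^α, is exactly d_min = n − P^{inv}(K) + 1, where P, P^{inv} use the period-n_L periodic extension of the profile (a_1,…,a_{n_L}). -/
set_option synthInstance.maxHeartbeats 1000000
set_option maxHeartbeats 4000000

namespace StmtAux

variable {a : ℕ → ℕ} {nL : ℕ}

lemma Pfun_mono {x y : ℕ} (h : x ≤ y) : Pfun a x ≤ Pfun a y :=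
  Finset.sum_le_sum_of_subset (Finset.range_subset_range.mpr h)

lemma aux_per (hper : ∀ i, a (i + nL) = a i) : ∀ j r, a (r + nL * j) = a r := by
  intro j
  induction j with
  | zero => simp
  | succ j ih =>
    intro r
    have : r + nL * (j + 1) = (r + nL * j) + nL := by ring
    rw [this, hper, ih]

lemma a_mod (hnL : 0 < nL) (hper : ∀ i, a (i + nL) = a i) (k : ℕ) :
    a k = a (k % nL) := by
  conv_lhs => rw [← Nat.mod_add_div k nL]
  exact aux_per hper _ _

lemma subset_sum (hnL : 0 < nL) (hmono : ∀ i j, i ≤ j → j < nL → a j ≤ a i) :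
    ∀ (n : ℕ) (S : Finset ℕ), S.card = n → S ⊆ Finset.range nL →
      ∑ s ∈ S, a s ≤ Pfun a n := by
  intro n
  induction n with
  | zero => intro S hS _; rw [Finset.card_eq_zero.mp hS]; simp [Pfun]
  | succ n ih =>
    intro S hS hsub
    have hne : S.Nonempty := Finset.card_pos.mp (by omega)
    set M := S.max' hne with hM
    have hMS : M ∈ S := S.max'_mem hne
    have hMlt : M < nL := Finset.mem_range.mp (hsub hMS)
    have hcard : n ≤ M := by
      have : S ⊆ Finset.range (M + 1) := by
        intro x hx
        exact Finset.mem_range.mpr (Nat.lt_succ_of_le (S.le_max' x hx))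
      have := Finset.card_le_card this
      simp [hS] at this
      omega
    have haM : a M ≤ a n := hmono n M hcard hMlt
    have hstep : a M + ∑ s ∈ S.erase M, a s = ∑ s ∈ S, a s :=
      Finset.add_sum_erase S a hMS
    have hih := ih (S.erase M) (by rw [Finset.card_erase_of_mem hMS, hS]; rfl)
      ((Finset.erase_subset M S).trans hsub)
    have hfin : Pfun a (n + 1) = Pfun a n + a n := Finset.sum_range_succ a n
    omega

lemma window (hnL : 0 < nL) (hper : ∀ i, a (i + nL) = a i)
    (hmono : ∀ i j, i ≤ j → j < nL → a j ≤ a i) :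
    ∀ (y x : ℕ), ∑ i ∈ Finset.range y, a (x + i) ≤ Pfun a y := by
  intro y
  induction y using Nat.strong_induction_on with
  | _ y ih =>
    intro x
    rcases le_or_gt y nL with hy | hy
    · have key : ∀ i j, i ≤ j → j < y → (x + i) % nL = (x + j) % nL → i = j := by
        intro i j hij hj hmod
        have h1 : nL ∣ (x + j) - (x + i) := (Nat.modEq_iff_dvd' (by omega)).mp hmod
        have h2 : x + j - (x + i) = j - i := by omega
        rw [h2] at h1
        rcases Nat.eq_zero_or_pos (j - i) with h0 | hpos
        · omega
        · have := Nat.le_of_dvd hpos h1; omega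
      have hinj : ∀ i ∈ Finset.range y, ∀ j ∈ Finset.range y,
          (x + i) % nL = (x + j) % nL → i = j := by
        intro i hi j hj hmod
        rcases le_total i j with h | h
        · exact key i j h (Finset.mem_range.mp hj) hmod
        · exact (key j i h (Finset.mem_range.mp hi) hmod.symm).symm
      have himage : ∑ s ∈ (Finset.range y).image (fun i => (x + i) % nL), a s
          = ∑ i ∈ Finset.range y, a ((x + i) % nL) := Finset.sum_image hinj
      have hcongr : ∑ i ∈ Finset.range y, a (x + i)
          = ∑ i ∈ Finset.range y, a ((x + i) % nL) :=
        Finset.sum_congr rfl fun i _ => a_mod hnL hper (x + i)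
      rw [hcongr, ← himage]
      have hcard : ((Finset.range y).image (fun i => (x + i) % nL)).card = y := by
        rw [Finset.card_image_of_injOn
          (fun i hi j hj h => hinj i (Finset.mem_coe.mp hi) j (Finset.mem_coe.mp hj) h),
          Finset.card_range]
      apply subset_sum hnL hmono y _ hcard
      intro s hs
      simp only [Finset.mem_image] at hs
      obtain ⟨i, _, rfl⟩ := hs
      exact Finset.mem_range.mpr (Nat.mod_lt _ hnL)
    · -- y > nL : split off a full period
      have hy' : y = nL + (y - nL) := by omega
      rw [hy', Finset.sum_range_add]
      have hfull : ∀ z, ∑ i ∈ Finset.range nL, a (z + i) = Pfun a nL := by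
        intro z
        induction z with
        | zero => simp [Pfun]
        | succ z ihz =>
          have h1 : ∑ i ∈ Finset.range (nL + 1), a (z + i)
              = ∑ i ∈ Finset.range nL, a (z + i) + a (z + nL) :=
            Finset.sum_range_succ _ _
          have h2 : ∑ i ∈ Finset.range (nL + 1), a (z + i)
              = a z + ∑ i ∈ Finset.range nL, a (z + 1 + i) := by
            rw [Finset.sum_range_succ' (fun i => a (z + i)) nL]
            simp only [Nat.add_zero, add_comm]
            congr 1
            · apply Finset.sum_congr rfl; intro i _; congr 1; omega
          have h3 : a (z + nL) = a z := hper z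
          omega
      rw [hfull]
      have h2 : ∑ i ∈ Finset.range (y - nL), a ((x + nL) + i) ≤ Pfun a (y - nL) :=
        ih (y - nL) (by omega) (x + nL)
      have h2' : ∑ i ∈ Finset.range (y - nL), a (x + (nL + i))
          = ∑ i ∈ Finset.range (y - nL), a ((x + nL) + i) :=
        Finset.sum_congr rfl fun i _ => by rw [← add_assoc]
      have h4 : Pfun a (nL + (y - nL)) = Pfun a nL + Pfun a (y - nL) := by
        unfold Pfun
        rw [Finset.sum_range_add]
        congr 1
        exact Finset.sum_congr rfl fun i _ => by rw [show nL + i = i + nL by ring, hper]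
      omega

lemma superadd (hnL : 0 < nL) (hper : ∀ i, a (i + nL) = a i)
    (hmono : ∀ i j, i ≤ j → j < nL → a j ≤ a i) (x y : ℕ) :
    Pfun a (x + y) ≤ Pfun a x + Pfun a y := by
  unfold Pfun
  rw [Finset.sum_range_add]
  exact Nat.add_le_add_left (window hnL hper hmono y x) _

lemma Pfun_nL_add (hper : ∀ i, a (i + nL) = a i) (x : ℕ) :
    Pfun a (nL + x) = Pfun a nL + Pfun a x := by
  unfold Pfun
  rw [Finset.sum_range_add]
  congr 1
  exact Finset.sum_congr rfl fun i _ => by rw [show nL + i = i + nL by ring, hper]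

lemma Pfun_mul_add (hper : ∀ i, a (i + nL) = a i) (j r : ℕ) :
    Pfun a (nL * j + r) = j * Pfun a nL + Pfun a r := by
  induction j with
  | zero => simp
  | succ j ih =>
    have : nL * (j + 1) + r = nL + (nL * j + r) := by ring
    rw [this, Pfun_nL_add hper, ih]
    ring

lemma sum_superadd (hnL : 0 < nL) (hper : ∀ i, a (i + nL) = a i)
    (hmono : ∀ i j, i ≤ j → j < nL → a j ≤ a i)
    {ι : Type*} (s : Finset ι) (f : ι → ℕ) :
    Pfun a (∑ b ∈ s, f b) ≤ ∑ b ∈ s, Pfun a (f b) := by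
  induction s using Finset.cons_induction with
  | empty => simp [Pfun]
  | cons b s hb ih =>
    rw [Finset.sum_cons, Finset.sum_cons]
    calc Pfun a (f b + ∑ x ∈ s, f x) ≤ Pfun a (f b) + Pfun a (∑ x ∈ s, f x) :=
          superadd hnL hper hmono _ _
      _ ≤ _ := Nat.add_le_add_left ih _

end StmtAux


namespace StmtAux

open Module Submodule

variable {k : Type*} [Field k] {R : Type*} [Fintype R] {β : Type*} [DecidableEq β]

/-- The submodule of functions supported on the block `b`. -/
def suppMod (blockOf : R → β) (b : β) : Submodule k (R → k) where
  carrier := {w | ∀ r, blockOf r ≠ b → w r = 0}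
  zero_mem' := fun _ _ => rfl
  add_mem' := by intro x y hx hy r hr; simp [hx r hr, hy r hr]
  smul_mem' := by intro c x hx r hr; simp [hx r hr]

lemma sum_finrank_le_finrank_iSup (blockOf : R → β) (s : Finset β)
    (W : β → Submodule k (R → k)) (hW : ∀ b, W b ≤ suppMod blockOf b) :
    ∑ b ∈ s, finrank k (W b) ≤ finrank k ↥(⨆ b ∈ s, W b) := by
  induction s using Finset.induction_on with
  | empty => simp
  | @insert b s hb ih =>
    rw [Finset.sum_insert hb, Finset.iSup_insert]
    have hdisj : W b ⊓ (⨆ b' ∈ s, W b') = ⊥ := by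
      rw [eq_bot_iff]
      rintro x ⟨hx1, hx2⟩
      have hle : (⨆ b' ∈ s, W b') ≤ ⨅ r ∈ {r | blockOf r = b}, LinearMap.ker (LinearMap.proj r) := by
        apply iSup₂_le
        intro b' hb'
        apply le_iInf₂
        intro r hr
        intro w hw
        have hne : blockOf r ≠ b' := by
          intro h
          rw [Set.mem_setOf_eq] at hr
          exact hb ((hr ▸ h : b = b') ▸ hb')
        exact hW b' hw r hne
      have hx2' := hle hx2
      show x ∈ (⊥ : Submodule k (R → k))
      rw [Submodule.mem_bot]
      funext r
      by_cases hr : blockOf r = b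
      · have := (Submodule.mem_iInf _).mp hx2'
        have := (Submodule.mem_iInf _).mp (this r) hr
        simpa using this
      · exact hW b hx1 r hr
    have heq := Submodule.finrank_sup_add_finrank_inf_eq (W b) (⨆ b' ∈ s, W b')
    rw [hdisj] at heq
    simp only [finrank_bot, add_zero] at heq
    omega

lemma finrank_iSup_le_sum (s : Finset β) {M : Type*} [AddCommGroup M] [Module k M]
    [FiniteDimensional k M] (W : β → Submodule k M) :
    finrank k ↥(⨆ b ∈ s, W b) ≤ ∑ b ∈ s, finrank k (W b) := by
  induction s using Finset.induction_on with
  | empty => simp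
  | @insert b s hb ih =>
    rw [Finset.sum_insert hb, Finset.iSup_insert]
    calc finrank k ↥(W b ⊔ ⨆ b' ∈ s, W b')
        ≤ finrank k (W b) + finrank k ↥(⨆ b' ∈ s, W b') :=
          Submodule.finrank_add_le_finrank_add_finrank _ _
      _ ≤ _ := Nat.add_le_add_left ih _

end StmtAux


namespace StmtAux

open Module Submodule

variable {F : Type*} [Field F] (Fq : Subfield F)

/-- evaluation of an `Fq`-combination of the `θ`'s -/
def ThetaL {ι : Type*} [Fintype ι] (θ : ι → F) : (ι → Fq) →ₗ[Fq] F where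
  toFun v := ∑ i, (v i : F) * θ i
  map_add' v w := by
    simp only [Pi.add_apply]
    push_cast
    simp [add_mul, Finset.sum_add_distrib]
  map_smul' s v := by
    simp only [RingHom.id_apply, Pi.smul_apply, smul_eq_mul]
    rw [Subfield.smul_def, smul_eq_mul, Finset.mul_sum]
    push_cast
    apply Finset.sum_congr rfl; intro i _; ring

lemma ThetaL_apply {ι : Type*} [Fintype ι] (θ : ι → F) (v : ι → Fq) :
    ThetaL Fq θ v = ∑ i, (v i : F) * θ i := rfl

lemma ThetaL_injective {ι : Type*} [Fintype ι] {θ : ι → F} (hθ : LinearIndependent Fq θ) :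
    Function.Injective (ThetaL Fq θ) := by
  rw [← LinearMap.ker_eq_bot, LinearMap.ker_eq_bot']
  intro v hv
  have h := Fintype.linearIndependent_iff.mp hθ v ?_
  · funext i; exact h i
  · rw [← hv, ThetaL_apply]
    apply Finset.sum_congr rfl
    intro i _
    rw [Subfield.smul_def, smul_eq_mul]

/-- the `Fq`-linear map attached to a linearized polynomial -/
def phiL (q : ℕ) {K : ℕ} (c : Fin K → F)
    (hadd : ∀ (l : ℕ) (x y : F), (x + y) ^ q ^ l = x ^ q ^ l + y ^ q ^ l)
    (hfrob : ∀ (s : Fq) (l : ℕ), (s : F) ^ q ^ l = s) : F →ₗ[Fq] F where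
  toFun x := ∑ l : Fin K, c l * x ^ q ^ (l : ℕ)
  map_add' x y := by
    simp only [hadd, mul_add]
    rw [Finset.sum_add_distrib]
  map_smul' s x := by
    simp only [RingHom.id_apply, Subfield.smul_def, smul_eq_mul]
    rw [Finset.mul_sum]
    apply Finset.sum_congr rfl; intro l _
    rw [mul_pow, hfrob]; ring

lemma phiL_apply (q : ℕ) {K : ℕ} (c : Fin K → F) (hadd) (hfrob) (x : F) :
    phiL Fq q c hadd hfrob x = ∑ l : Fin K, c l * x ^ q ^ (l : ℕ) := rfl

/-- embedding of block-`b` coordinates -/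
def embL {t KL Δ α' : ℕ} (b : Fin t) :
    (Fin KL → Fq) →ₗ[Fq] ((Fin t × Fin KL) ⊕ (Fin Δ × Fin α') → Fq) where
  toFun v := Sum.elim (fun bi => if bi.1 = b then v bi.2 else 0) (fun _ => 0)
  map_add' v w := by
    funext r
    rcases r with bi | de
    · simp only [Sum.elim_inl, Pi.add_apply]
      split <;> simp
    · simp
  map_smul' s v := by
    funext r
    rcases r with bi | de
    · simp only [Sum.elim_inl, RingHom.id_apply, Pi.smul_apply, smul_eq_mul]
      split <;> simp
    · simp

lemma embL_injective {t KL Δ α' : ℕ} (b : Fin t) :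
    Function.Injective (embL Fq (Δ := Δ) (α' := α') (KL := KL) b) := by
  intro v w h
  funext i
  have := congrFun h (Sum.inl (b, i))
  simpa [embL] using this

/-- the span of the thick columns of `B` indexed by `S` -/
def VB {KL nL α' : ℕ} (B : Matrix (Fin KL) (Fin nL × Fin α') Fq) (S : Finset (Fin nL)) :
    Submodule Fq (Fin KL → Fq) :=
  span Fq ((fun p (i : Fin KL) => B i p) '' {p | p.1 ∈ S})

lemma finrank_VB {KL nL α' : ℕ} (B : Matrix (Fin KL) (Fin nL × Fin α') Fq)
    (S : Finset (Fin nL)) : finrank Fq (VB Fq B S) = thickRank B S := by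
  rw [thickRank, Matrix.rank_eq_finrank_span_cols]
  have h0 : (B.submatrix id (fun p : {p : Fin nL × Fin α' // p.1 ∈ S} => (p : Fin nL × Fin α'))).transpose
      = (fun p (i : Fin KL) => B i p) ∘ Subtype.val := rfl
  have h1 : Set.range (B.submatrix id (fun p : {p : Fin nL × Fin α' // p.1 ∈ S} => (p : Fin nL × Fin α'))).transpose
      = (fun p (i : Fin KL) => B i p) '' {p | p.1 ∈ S} := by
    rw [h0, Set.range_comp, Subtype.range_coe_subtype]
  rw [show Set.range (B.submatrix id (fun p : {p : Fin nL × Fin α' // p.1 ∈ S} => (p : Fin nL × Fin α'))).col = Set.range (B.submatrix id (fun p : {p : Fin nL × Fin α' // p.1 ∈ S} => (p : Fin nL × Fin α'))).transpose from rfl, h1]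
  rfl

lemma card_filter_val_lt (n r : ℕ) (h : r ≤ n) :
    ((Finset.univ : Finset (Fin n)).filter fun j => j.val < r).card = r := by
  conv_rhs => rw [← Finset.card_range r]
  refine Finset.card_bij' (fun (j : Fin n) _ => j.val) (fun x hx => ⟨x, ?_⟩) ?_ ?_ ?_ ?_
  · have := Finset.mem_range.mp hx; omega
  · intro j hj
    simp only [Finset.mem_filter] at hj
    exact Finset.mem_range.mpr hj.2
  · intro x hx
    simp only [Finset.mem_filter, Finset.mem_univ, true_and]
    exact Finset.mem_range.mp hx
  · intro j hj; rfl
  · intro x hx; rfl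

lemma sum_ite_blocks (t jst X Y : ℕ) (hj : jst < t) :
    (∑ b : Fin t, (if (b : ℕ) < jst then X else if (b : ℕ) = jst then Y else 0))
      = jst * X + Y := by
  rw [Fin.sum_univ_eq_sum_range (fun i => if i < jst then X else if i = jst then Y else 0) t]
  rw [Finset.range_eq_Ico, ← Finset.sum_Ico_consecutive _ (Nat.zero_le (jst + 1)) hj]
  have h2 : ∑ i ∈ Finset.Ico (jst + 1) t, (if i < jst then X else if i = jst then Y else 0) = 0 := by
    apply Finset.sum_eq_zero
    intro i hi
    simp only [Finset.mem_Ico] at hi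
    rw [if_neg (by omega), if_neg (by omega)]
  rw [h2, add_zero, ← Finset.range_eq_Ico, Finset.sum_range_succ]
  rw [if_neg (by omega), if_pos rfl]
  congr 1
  rw [Finset.sum_congr rfl (fun i hi => if_pos (Finset.mem_range.mp hi))]
  simp [mul_comm]

end StmtAux


namespace StmtAux

open Module Submodule Polynomial

lemma finrank_ker_le {F : Type*} [Field F] (Fq : Subfield F) [Fintype Fq]
    (q K : ℕ) (hq2 : 2 ≤ q) (hK : 0 < K)
    (hcard : Fintype.card Fq = q) [FiniteDimensional Fq F]
    (c : Fin K → F) (hc : c ≠ 0) (φ : F →ₗ[Fq] F)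
    (hφ : ∀ x, φ x = ∑ l : Fin K, c l * x ^ q ^ (l : ℕ)) :
    finrank Fq (LinearMap.ker φ) + 1 ≤ K := by
  classical
  set P : Polynomial F := ∑ l : Fin K, Polynomial.C (c l) * Polynomial.X ^ (q ^ (l : ℕ)) with hP
  obtain ⟨l₀, hl₀⟩ : ∃ l, c l ≠ 0 := by
    by_contra h; push_neg at h; exact hc (funext h)
  have hcoeff : P.coeff (q ^ (l₀ : ℕ)) = c l₀ := by
    rw [hP, Polynomial.finset_sum_coeff]
    rw [Finset.sum_eq_single l₀]
    · simp [Polynomial.coeff_C_mul, Polynomial.coeff_X_pow]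
    · intro l _ hne
      simp only [Polynomial.coeff_C_mul, Polynomial.coeff_X_pow]
      rw [if_neg, mul_zero]
      intro heq
      exact hne (Fin.ext (Nat.pow_right_injective hq2 heq.symm))
    · intro h; exact absurd (Finset.mem_univ l₀) h
  have hPne : P ≠ 0 := fun h => hl₀ (by rw [← hcoeff, h, Polynomial.coeff_zero])
  have hdeg : P.natDegree ≤ q ^ (K - 1) := by
    apply Polynomial.natDegree_sum_le_of_forall_le
    intro l _
    refine le_trans (Polynomial.natDegree_C_mul_le _ _) ?_
    rw [Polynomial.natDegree_X_pow]
    exact Nat.pow_le_pow_right (by omega) (by omega)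
  have hroot : ∀ x : F, x ∈ LinearMap.ker φ → P.IsRoot x := by
    intro x hx
    rw [LinearMap.mem_ker, hφ] at hx
    unfold Polynomial.IsRoot
    rw [hP, Polynomial.eval_finset_sum]
    simpa [Polynomial.eval_mul] using hx
  haveI : Finite F := Module.finite_of_finite Fq
  haveI : Fintype F := Fintype.ofFinite F
  haveI : Fintype (LinearMap.ker φ) := Fintype.ofFinite _
  have hinj : Function.Injective
      (fun x : LinearMap.ker φ => (⟨x.1, Multiset.mem_toFinset.mpr
        ((Polynomial.mem_roots hPne).mpr (hroot x.1 x.2))⟩ : {y // y ∈ P.roots.toFinset})) := by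
    intro x y h
    have := congrArg Subtype.val h
    exact Subtype.ext this
  have h1 : Fintype.card (LinearMap.ker φ) ≤ P.roots.toFinset.card := by
    have h0 := Fintype.card_le_of_injective _ hinj
    rwa [Fintype.card_coe] at h0
  have h2 : P.roots.toFinset.card ≤ q ^ (K - 1) :=
    le_trans (Multiset.toFinset_card_le _) (le_trans (Polynomial.card_roots' P) hdeg)
  have h3 : Fintype.card (LinearMap.ker φ) = q ^ finrank Fq (LinearMap.ker φ) := by
    rw [card_eq_pow_finrank (K := Fq) (V := LinearMap.ker φ), hcard]
  have h4 : q ^ finrank Fq (LinearMap.ker φ) ≤ q ^ (K - 1) := by omega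
  have h5 : finrank Fq (LinearMap.ker φ) ≤ K - 1 := (Nat.pow_le_pow_iff_right (by omega)).mp h4
  omega

end StmtAux


/-- **Theorem 3: information locality construction.**  Let `q` be a prime
power, `Fq` a subfield with `q` elements of a field `F` with `[F : Fq] = m`.  Let
`nL, α, t, Δ, K` be positive integers, `a_1 ≥ … ≥ a_{nL} ≥ 0` a profile with
`K_L := P(nL) ≥ 1` (0-indexed periodic extension `a`), and assume `K ≤ t·K_L` and
`m ≥ t·K_L + Δ·α`.  Let `B` be a `K_L × (nL·α)` URA matrix over `Fq` with this profile and
let `G` be the `(t·K_L + Δα) × (t·nL·α + Δα)` block-diagonal matrix whose first `t`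
diagonal blocks are copies of `B` and whose last diagonal block is the `(Δα) × (Δα)`
identity; `G` has `n := t·nL + Δ` thick columns of width `α` (rows are indexed by
`(Fin t × Fin K_L) ⊕ (Fin Δ × Fin α)` and thick columns by `(Fin t × Fin nL) ⊕ Fin Δ`).
Let `θ` be a family of `t·K_L + Δα` elements of `F` linearly independent over `Fq`, and let
`C` consist of all vectors `(f(θ_1),…,f(θ_{tK_L+Δα}))·G`, where `f` ranges over linearized
polynomials of `q`-degree at most `K - 1` over `F`.  Then the encoding map is injective and
the minimum thick Hamming distance of `C`, viewed as a length-`n` code over the alphabet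
`F^α`, is exactly `d_min = n - P^{inv}(K) + 1`. -/
theorem stmt_11 (q m nL α t Δ K : ℕ) (hq : IsPrimePow q)
    (hnL : 0 < nL) (hα : 0 < α) (ht : 0 < t) (hΔ : 0 < Δ) (hK : 0 < K)
    (a : ℕ → ℕ) (hper : ∀ i, a (i + nL) = a i)
    (hmono : ∀ i j, i ≤ j → j < nL → a j ≤ a i)
    (hKL : 1 ≤ Pfun a nL)
    (hKtKL : K ≤ t * Pfun a nL) (hm : t * Pfun a nL + Δ * α ≤ m)
    (F : Type*) [Field F] (Fq : Subfield F) [Fintype Fq]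
    (hcard : Fintype.card Fq = q) (hmF : Module.finrank Fq F = m)
    (B : Matrix (Fin (Pfun a nL)) (Fin nL × Fin α) Fq)
    (hB : ∀ S : Finset (Fin nL), thickRank B S = Pfun a S.card)
    (G : Matrix ((Fin t × Fin (Pfun a nL)) ⊕ (Fin Δ × Fin α))
          (((Fin t × Fin nL) ⊕ Fin Δ) × Fin α) Fq)
    (hG1 : ∀ b i b' j c,
      G (Sum.inl (b, i)) (Sum.inl (b', j), c) = if b = b' then B i (j, c) else 0)
    (hG2 : ∀ b i d c, G (Sum.inl (b, i)) (Sum.inr d, c) = 0)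
    (hG3 : ∀ d e b' j c, G (Sum.inr (d, e)) (Sum.inl (b', j), c) = 0)
    (hG4 : ∀ d e d' c,
      G (Sum.inr (d, e)) (Sum.inr d', c) = if d = d' ∧ e = c then 1 else 0)
    (θ : (Fin t × Fin (Pfun a nL)) ⊕ (Fin Δ × Fin α) → F) (hθ : LinearIndependent Fq θ)
    (enc : (Fin K → F) → (((Fin t × Fin nL) ⊕ Fin Δ) × Fin α → F))
    (henc : ∀ u p, enc u p = ∑ i, (∑ l, u l * θ i ^ q ^ (l : ℕ)) * (G i p : F)) :
    Function.Injective enc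
    ∧ (∀ u v, u ≠ v → t * nL + Δ - Pinv a K + 1 ≤ thickDist (enc u) (enc v))
    ∧ (∃ u v, u ≠ v ∧ thickDist (enc u) (enc v) = t * nL + Δ - Pinv a K + 1) := by
  classical
  have hq2 : 2 ≤ q := hq.two_le
  have htKL : 1 ≤ t * Pfun a nL := le_trans (by omega) (Nat.mul_le_mul ht hKL)
  haveI hFD : FiniteDimensional Fq F := Module.finite_of_finrank_pos (by rw [hmF]; omega)
  -- characteristic facts
  set p := ringChar Fq with hpdef
  haveI : CharP Fq p := ringChar.charP Fq
  have hpprime : p.Prime := CharP.char_is_prime Fq p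
  haveI : Fact p.Prime := ⟨hpprime⟩
  obtain ⟨np, -, hcardp⟩ := FiniteField.card Fq p
  have hqp : q = p ^ (np : ℕ) := by rw [← hcard, hcardp]
  haveI : CharP F p := charP_of_injective_ringHom Fq.subtype.injective p
  haveI : ExpChar F p := ExpChar.prime hpprime
  have hadd : ∀ (l : ℕ) (x y : F), (x + y) ^ q ^ l = x ^ q ^ l + y ^ q ^ l := by
    intro l x y
    rw [hqp, ← pow_mul]
    exact add_pow_char_pow (R := F) (p := p) (x := x) (y := y) (n := ↑np * l)
  have hsum : ∀ (l : ℕ) (g : (Fin t × Fin (Pfun a nL)) ⊕ (Fin Δ × Fin α) → F),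
      (∑ i, g i) ^ q ^ l = ∑ i, g i ^ q ^ l := by
    intro l g
    rw [hqp, ← pow_mul]
    exact sum_pow_char_pow (R := F) (p := p) (n := ↑np * l) Finset.univ g
  have hfrob : ∀ (s : Fq) (l : ℕ), (s : F) ^ q ^ l = s := by
    intro s l
    have h1 : s ^ q ^ l = s := by rw [← hcard]; exact FiniteField.pow_card_pow l s
    calc (s : F) ^ q ^ l = ((s ^ q ^ l : Fq) : F) := by push_cast; ring
      _ = s := by rw [h1]
  -- the θ-combination map and the linearized-polynomial maps
  set Θ := StmtAux.ThetaL Fq θ with hΘdef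
  have hΘinj : Function.Injective Θ := StmtAux.ThetaL_injective Fq hθ
  set φ : (Fin K → F) → F →ₗ[Fq] F := fun c => StmtAux.phiL Fq q c hadd hfrob with hφdef
  have hφapp : ∀ c x, φ c x = ∑ l : Fin K, c l * x ^ q ^ (l : ℕ) := fun c x => rfl
  set η : ((Fin t × Fin nL) ⊕ Fin Δ) × Fin α → F := fun pc => Θ (fun i => G i pc) with hηdef
  have hencφ : ∀ c pc, enc c pc = φ c (η pc) := by
    intro c pc
    rw [henc, hφapp]
    have hη : η pc = ∑ i, ((G i pc : F)) * θ i := rfl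
    rw [hη]
    calc ∑ i, (∑ l, c l * θ i ^ q ^ (l : ℕ)) * (G i pc : F)
        = ∑ i, ∑ l : Fin K, (c l * θ i ^ q ^ (l : ℕ)) * (G i pc : F) :=
          Finset.sum_congr rfl fun i _ => Finset.sum_mul _ _ _
      _ = ∑ l : Fin K, ∑ i, (c l * θ i ^ q ^ (l : ℕ)) * (G i pc : F) := Finset.sum_comm
      _ = ∑ l : Fin K, c l * (∑ i, ((G i pc : F)) * θ i) ^ q ^ (l : ℕ) := by
          apply Finset.sum_congr rfl
          intro l _
          rw [hsum, Finset.mul_sum]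
          apply Finset.sum_congr rfl
          intro i _
          rw [mul_pow, hfrob]
          ring
  have hencsub : ∀ u v pc, enc u pc - enc v pc = φ (u - v) (η pc) := by
    intro u v pc
    rw [hencφ, hencφ, hφapp, hφapp, hφapp, ← Finset.sum_sub_distrib]
    apply Finset.sum_congr rfl
    intro l _
    simp [sub_mul]
  have hker : ∀ c : Fin K → F, c ≠ 0 → Module.finrank Fq (LinearMap.ker (φ c)) + 1 ≤ K :=
    fun c hc => StmtAux.finrank_ker_le Fq q K hq2 hK hcard c hc (φ c) (hφapp c)
  -- the profile is bounded by α
  have ha0 : ∀ i, a i ≤ α := by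
    intro i
    have h1 : a i = a (i % nL) := StmtAux.a_mod hnL hper i
    have h2 : a (i % nL) ≤ a 0 := hmono 0 _ (Nat.zero_le _) (Nat.mod_lt _ hnL)
    have h3 : a 0 ≤ α := by
      have hB1 := hB {(⟨0, hnL⟩ : Fin nL)}
      rw [Finset.card_singleton] at hB1
      have hP1 : Pfun a 1 = a 0 := by simp [Pfun]
      have hle : thickRank B {(⟨0, hnL⟩ : Fin nL)} ≤ α := by
        have hcardsub :
            Fintype.card {p : Fin nL × Fin α // p.1 ∈ ({(⟨0, hnL⟩ : Fin nL)} : Finset (Fin nL))} = α := by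
          have e : {p : Fin nL × Fin α // p.1 ∈ ({(⟨0, hnL⟩ : Fin nL)} : Finset (Fin nL))} ≃ Fin α :=
            { toFun := fun sp => sp.1.2
              invFun := fun c => ⟨((⟨0, hnL⟩ : Fin nL), c), Finset.mem_singleton_self _⟩
              left_inv := by
                rintro ⟨⟨j, c⟩, hj⟩
                have : j = (⟨0, hnL⟩ : Fin nL) := Finset.mem_singleton.mp hj
                subst this
                rfl
              right_inv := fun c => rfl }
          rw [Fintype.card_congr e, Fintype.card_fin]
        rw [thickRank]
        exact le_trans (Matrix.rank_le_card_width _) (le_of_eq hcardsub)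
      omega
    omega
  -- facts about Pinv
  have hPfun0 : Pfun a 0 = 0 := rfl
  have hPfuntnL : K ≤ Pfun a (nL * t) := by
    have h := StmtAux.Pfun_mul_add hper t 0
    rw [add_zero, hPfun0, add_zero] at h
    omega
  have hsetne : {s : ℕ | K ≤ Pfun a s}.Nonempty := ⟨nL * t, hPfuntnL⟩
  have hPinvmem : K ≤ Pfun a (Pinv a K) := Nat.sInf_mem hsetne
  have hPinvle : Pinv a K ≤ nL * t := Nat.sInf_le hPfuntnL
  have hPinvpos : 0 < Pinv a K := by
    rcases Nat.eq_zero_or_pos (Pinv a K) with h0 | h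
    · rw [h0, hPfun0] at hPinvmem; omega
    · exact h
  have hPfunlt : ∀ s, s < Pinv a K → Pfun a s < K := by
    intro s hs
    have h := Nat.notMem_of_lt_sInf hs
    simp only [Set.mem_setOf_eq, not_le] at h
    exact h
  have hcomm : nL * t = t * nL := Nat.mul_comm nL t
  -- column spans
  set col : (((Fin t × Fin nL) ⊕ Fin Δ) × Fin α) →
      ((Fin t × Fin (Pfun a nL)) ⊕ (Fin Δ × Fin α) → Fq) :=
    fun pc i => G i pc with hcoldef
  set colsp : Finset ((Fin t × Fin nL) ⊕ Fin Δ) →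
      Submodule Fq ((Fin t × Fin (Pfun a nL)) ⊕ (Fin Δ × Fin α) → Fq) :=
    fun Z => Submodule.span Fq (col '' {pc | pc.1 ∈ Z}) with hcolspdef
  set sB : Finset ((Fin t × Fin nL) ⊕ Fin Δ) → Fin t → ℕ :=
    fun Z b => (Finset.univ.filter fun j : Fin nL => Sum.inl (b, j) ∈ Z).card with hsBdef
  set z2 : Finset ((Fin t × Fin nL) ⊕ Fin Δ) → ℕ :=
    fun Z => (Finset.univ.filter fun d : Fin Δ => Sum.inr d ∈ Z).card with hz2def
  have hembcol : ∀ (b : Fin t) (j : Fin nL) (c' : Fin α),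
      StmtAux.embL Fq b (fun i => B i (j, c')) = col (Sum.inl (b, j), c') := by
    intro b j c'
    funext r
    rcases r with ⟨b₀, i⟩ | ⟨d₀, e⟩
    · show (if b₀ = b then B i (j, c') else 0) = G (Sum.inl (b₀, i)) (Sum.inl (b, j), c')
      rw [hG1]
    · show (0 : Fq) = G (Sum.inr (d₀, e)) (Sum.inl (b, j), c')
      rw [hG3]
  have keyrank : ∀ Z, Module.finrank Fq (colsp Z) = (∑ b, Pfun a (sB Z b)) + α * z2 Z := by
    intro Z
    set W : Fin t ⊕ Fin Δ →
        Submodule Fq ((Fin t × Fin (Pfun a nL)) ⊕ (Fin Δ × Fin α) → Fq) :=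
      Sum.elim
        (fun b => Submodule.span Fq (col '' {pc | pc.1 ∈ Z ∧ ∃ j, pc.1 = Sum.inl (b, j)}))
        (fun d => Submodule.span Fq (col '' {pc | pc.1 ∈ Z ∧ pc.1 = Sum.inr d})) with hWdef
    have hWsupp : ∀ β, W β ≤ StmtAux.suppMod (Sum.map Prod.fst Prod.fst) β := by
      rintro (b | d)
      · rw [hWdef]
        simp only [Sum.elim_inl]
        rw [Submodule.span_le]
        rintro x ⟨⟨pc1, c'⟩, ⟨hpcZ, j, hpc1⟩, rfl⟩
        dsimp only at hpc1
        subst hpc1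
        intro r hr
        rcases r with ⟨b₀, i⟩ | ⟨d₀, e⟩
        · have hb₀ : ¬(b₀ = b) := fun h => hr (by simp [h])
          show G (Sum.inl (b₀, i)) (Sum.inl (b, j), c') = 0
          rw [hG1, if_neg hb₀]
        · show G (Sum.inr (d₀, e)) (Sum.inl (b, j), c') = 0
          exact hG3 _ _ _ _ _
      · rw [hWdef]
        simp only [Sum.elim_inr]
        rw [Submodule.span_le]
        rintro x ⟨⟨pc1, c'⟩, ⟨hpcZ, hpc1⟩, rfl⟩
        dsimp only at hpc1
        subst hpc1
        intro r hr
        rcases r with ⟨b₀, i⟩ | ⟨d₀, e⟩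
        · show G (Sum.inl (b₀, i)) (Sum.inr d, c') = 0
          exact hG2 _ _ _ _
        · have hd₀ : ¬(d₀ = d) := fun h => hr (by simp [h])
          show G (Sum.inr (d₀, e)) (Sum.inr d, c') = 0
          rw [hG4, if_neg (by tauto)]
    have hcolspW : colsp Z = ⨆ β ∈ (Finset.univ : Finset (Fin t ⊕ Fin Δ)), W β := by
      apply le_antisymm
      · rw [hcolspdef]
        rw [Submodule.span_le]
        rintro x ⟨⟨pc1, c'⟩, hpc, rfl⟩
        rcases pc1 with ⟨b, j⟩ | d
        · refine Submodule.mem_iSup_of_mem (Sum.inl b) ?_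
          refine Submodule.mem_iSup_of_mem (Finset.mem_univ _) ?_
          rw [hWdef]
          exact Submodule.subset_span ⟨(Sum.inl (b, j), c'), ⟨hpc, j, rfl⟩, rfl⟩
        · refine Submodule.mem_iSup_of_mem (Sum.inr d) ?_
          refine Submodule.mem_iSup_of_mem (Finset.mem_univ _) ?_
          rw [hWdef]
          exact Submodule.subset_span ⟨(Sum.inr d, c'), ⟨hpc, rfl⟩, rfl⟩
      · refine iSup₂_le fun β _ => ?_
        rcases β with b | d
        · rw [hWdef]
          simp only [Sum.elim_inl]
          exact Submodule.span_mono (Set.image_mono (fun pc h => h.1))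
        · rw [hWdef]
          simp only [Sum.elim_inr]
          exact Submodule.span_mono (Set.image_mono (fun pc h => h.1))
    have hWl : ∀ b : Fin t, W (Sum.inl b) = Submodule.map (StmtAux.embL Fq b)
        (StmtAux.VB Fq B (Finset.univ.filter fun j => Sum.inl (b, j) ∈ Z)) := by
      intro b
      rw [hWdef]
      simp only [Sum.elim_inl]
      rw [StmtAux.VB, Submodule.map_span]
      congr 1
      ext x
      constructor
      · rintro ⟨⟨pc1, c'⟩, ⟨hpcZ, j, hpc1⟩, rfl⟩
        dsimp only at hpc1
        subst hpc1
        refine ⟨(fun i => B i (j, c')), ⟨(j, c'), ?_, rfl⟩, hembcol b j c'⟩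
        exact (show j ∈ Finset.univ.filter (fun j : Fin nL => Sum.inl (b, j) ∈ Z) from
          Finset.mem_filter.mpr ⟨Finset.mem_univ _, hpcZ⟩)
      · rintro ⟨y, ⟨⟨j, c'⟩, hjc, rfl⟩, rfl⟩
        exact ⟨(Sum.inl (b, j), c'), ⟨(Finset.mem_filter.mp (show j ∈ Finset.univ.filter (fun j : Fin nL => Sum.inl (b, j) ∈ Z) from hjc)).2, j, rfl⟩,
          (hembcol b j c').symm⟩
    have hWlrank : ∀ b, Module.finrank Fq (W (Sum.inl b)) = Pfun a (sB Z b) := by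
      intro b
      rw [hWl b]
      rw [← LinearEquiv.finrank_eq (Submodule.equivMapOfInjective _
        (StmtAux.embL_injective Fq b)
        (StmtAux.VB Fq B (Finset.univ.filter fun j => Sum.inl (b, j) ∈ Z)))]
      rw [StmtAux.finrank_VB, hB, hsBdef]
    have hWrrank : ∀ d, Module.finrank Fq (W (Sum.inr d)) = if Sum.inr d ∈ Z then α else 0 := by
      intro d
      rw [hWdef]
      simp only [Sum.elim_inr]
      by_cases hd : Sum.inr d ∈ Z
      · rw [if_pos hd]
        have hset : col '' {pc : ((Fin t × Fin nL) ⊕ Fin Δ) × Fin α | pc.1 ∈ Z ∧ pc.1 = Sum.inr d}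
            = Set.range (fun c : Fin α => col (Sum.inr d, c)) := by
          ext x
          constructor
          · rintro ⟨⟨pc1, c'⟩, ⟨h1, h2⟩, rfl⟩
            dsimp only at h2
            subst h2
            exact ⟨c', rfl⟩
          · rintro ⟨c', rfl⟩
            exact ⟨(Sum.inr d, c'), ⟨hd, rfl⟩, rfl⟩
        show Module.finrank Fq (Submodule.span Fq (col '' {pc : ((Fin t × Fin nL) ⊕ Fin Δ) × Fin α | pc.1 ∈ Z ∧ pc.1 = Sum.inr d})) = α
        rw [hset]
        have hli : LinearIndependent Fq (fun c : Fin α => col (Sum.inr d, c)) := by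
          rw [Fintype.linearIndependent_iff]
          intro g hg e
          have h1 := congrFun hg (Sum.inr (d, e))
          rw [Finset.sum_apply] at h1
          have h2 : ∀ c : Fin α, (g c • col (Sum.inr d, c)) (Sum.inr (d, e))
              = if e = c then g c else 0 := by
            intro c
            have : col (Sum.inr d, c) (Sum.inr (d, e)) = if e = c then 1 else 0 := by
              show G (Sum.inr (d, e)) (Sum.inr d, c) = _
              rw [hG4]
              simp
            rw [Pi.smul_apply, this, smul_eq_mul]
            split <;> simp
          rw [Finset.sum_congr rfl (fun c _ => h2 c), Finset.sum_ite_eq] at h1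
          simpa using h1
        rw [finrank_span_eq_card hli, Fintype.card_fin]
      · rw [if_neg hd]
        have hset : col '' {pc : ((Fin t × Fin nL) ⊕ Fin Δ) × Fin α | pc.1 ∈ Z ∧ pc.1 = Sum.inr d}
            = ∅ := by
          ext x
          simp only [Set.mem_image, Set.mem_setOf_eq, Set.mem_empty_iff_false, iff_false]
          rintro ⟨pc, ⟨h1, h2⟩, rfl⟩
          exact hd (h2 ▸ h1)
        show Module.finrank Fq (Submodule.span Fq (col '' {pc : ((Fin t × Fin nL) ⊕ Fin Δ) × Fin α | pc.1 ∈ Z ∧ pc.1 = Sum.inr d})) = 0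
        rw [hset, Submodule.span_empty, finrank_bot]
    have h5 : Module.finrank Fq (colsp Z) = ∑ β : Fin t ⊕ Fin Δ, Module.finrank Fq (W β) := by
      rw [hcolspW]
      apply le_antisymm
      · exact StmtAux.finrank_iSup_le_sum Finset.univ W
      · exact StmtAux.sum_finrank_le_finrank_iSup _ Finset.univ W hWsupp
    rw [h5, Fintype.sum_sum_type]
    congr 1
    · exact Finset.sum_congr rfl fun b _ => hWlrank b
    · calc ∑ d, Module.finrank Fq (W (Sum.inr d))
          = ∑ d : Fin Δ, (if Sum.inr d ∈ Z then α else 0) :=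
            Finset.sum_congr rfl fun d _ => hWrrank d
        _ = α * z2 Z := by
            simp only [hz2def]
            rw [Finset.sum_ite, Finset.sum_const, Finset.sum_const_zero, add_zero,
              smul_eq_mul, mul_comm]
  have keycard : ∀ Z : Finset ((Fin t × Fin nL) ⊕ Fin Δ), Z.card = (∑ b, sB Z b) + z2 Z := by
    intro Z
    have h1 := Finset.card_eq_sum_card_fiberwise
      (f := Sum.map Prod.fst id) (s := Z) (t := (Finset.univ : Finset (Fin t ⊕ Fin Δ)))
      (fun x _ => Finset.mem_univ _)
    rw [h1, Fintype.sum_sum_type]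
    congr 1
    · apply Finset.sum_congr rfl
      intro b _
      simp only [hsBdef]
      refine Finset.card_bij'
        (fun x _ => Sum.elim Prod.snd (fun _ => (⟨0, hnL⟩ : Fin nL)) x)
        (fun j _ => Sum.inl (b, j)) ?_ ?_ ?_ ?_
      · rintro (⟨b', j⟩ | d) hx
        · simp only [Finset.mem_filter] at hx ⊢
          have hb : b' = b := by simpa using hx.2
          subst hb
          exact ⟨Finset.mem_univ _, hx.1⟩
        · exfalso
          simp only [Finset.mem_filter, Sum.map_inr, id] at hx
          exact absurd hx.2 (by simp)
      · intro j hj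
        simp only [Finset.mem_filter] at hj ⊢
        exact ⟨hj.2, by simp⟩
      · rintro (⟨b', j⟩ | d) hx
        · simp only [Finset.mem_filter] at hx
          have hb : b' = b := by simpa using hx.2
          subst hb
          rfl
        · exfalso
          simp only [Finset.mem_filter, Sum.map_inr, id] at hx
          exact absurd hx.2 (by simp)
      · intro j hj
        rfl
    · simp only [hz2def]
      rw [Finset.card_filter]
      apply Finset.sum_congr rfl
      intro d _
      have heq : Z.filter (fun x => Sum.map Prod.fst id x = Sum.inr d)
          = Z.filter (fun x => x = Sum.inr d) := by
        apply Finset.filter_congr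
        rintro (bj | d') hx
        · simp
        · simp
      rw [heq, Finset.filter_eq']
      split <;> simp
  have hmapsp : ∀ Z, Submodule.map Θ (colsp Z)
      = Submodule.span Fq (η '' {pc | pc.1 ∈ Z}) := by
    intro Z
    rw [hcolspdef]
    rw [Submodule.map_span, ← Set.image_comp]
    rfl
  have hfrmap : ∀ Z, Module.finrank Fq (Submodule.span Fq (η '' {pc | pc.1 ∈ Z}))
      = Module.finrank Fq (colsp Z) := by
    intro Z
    rw [← hmapsp]
    exact (LinearEquiv.finrank_eq (Submodule.equivMapOfInjective Θ hΘinj (colsp Z))).symm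
  have CB : ∀ (c : Fin K → F), c ≠ 0 → ∀ Z : Finset ((Fin t × Fin nL) ⊕ Fin Δ),
      (∀ pc : ((Fin t × Fin nL) ⊕ Fin Δ) × Fin α, pc.1 ∈ Z → φ c (η pc) = 0) →
      Pfun a Z.card + 1 ≤ K := by
    intro c hc Z hZ
    have h1 : Submodule.span Fq (η '' {pc | pc.1 ∈ Z}) ≤ LinearMap.ker (φ c) := by
      rw [Submodule.span_le]
      rintro x ⟨pc, hpc, rfl⟩
      exact LinearMap.mem_ker.mpr (hZ pc hpc)
    have h3 : Module.finrank Fq (colsp Z) ≤ Module.finrank Fq (LinearMap.ker (φ c)) := by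
      rw [← hfrmap]
      exact Submodule.finrank_mono h1
    have h4 : Pfun a Z.card ≤ Module.finrank Fq (colsp Z) := by
      rw [keyrank Z, keycard Z]
      calc Pfun a ((∑ b, sB Z b) + z2 Z)
          ≤ Pfun a (∑ b, sB Z b) + Pfun a (z2 Z) := StmtAux.superadd hnL hper hmono _ _
        _ ≤ (∑ b, Pfun a (sB Z b)) + Pfun a (z2 Z) :=
            add_le_add_left (StmtAux.sum_superadd hnL hper hmono _ _) _
        _ ≤ (∑ b, Pfun a (sB Z b)) + α * z2 Z := by
            apply add_le_add_right
            calc Pfun a (z2 Z) = ∑ i ∈ Finset.range (z2 Z), a i := rfl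
              _ ≤ ∑ _i ∈ Finset.range (z2 Z), α := Finset.sum_le_sum fun i _ => ha0 i
              _ = α * z2 Z := by
                  rw [Finset.sum_const, Finset.card_range, smul_eq_mul, mul_comm]
    have h5 := hker c hc
    omega
  -- distance/zero-set accounting
  have hdisteq : ∀ u v : Fin K → F, thickDist (enc u) (enc v)
      + (Finset.univ.filter (fun j : (Fin t × Fin nL) ⊕ Fin Δ =>
          ¬∃ a', enc u (j, a') ≠ enc v (j, a'))).card = t * nL + Δ := by
    intro u v
    have h := Finset.card_filter_add_card_filter_not
      (s := (Finset.univ : Finset ((Fin t × Fin nL) ⊕ Fin Δ)))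
      (p := fun j => ∃ a', enc u (j, a') ≠ enc v (j, a'))
    have hcardu : (Finset.univ : Finset ((Fin t × Fin nL) ⊕ Fin Δ)).card = t * nL + Δ := by
      simp [Finset.card_univ]
    rw [hcardu] at h
    rw [thickDist]
    convert h using 3
  -- Part 1 : injectivity
  have INJ : Function.Injective enc := by
    intro u v huv
    by_contra hne
    have hc : u - v ≠ 0 := sub_ne_zero.mpr hne
    have hzero : ∀ pc, φ (u - v) (η pc) = 0 := by
      intro pc
      rw [← hencsub, huv, sub_self]
    have hVBtop : StmtAux.VB Fq B Finset.univ = ⊤ := by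
      apply Submodule.eq_top_of_finrank_eq
      rw [StmtAux.finrank_VB, hB, Finset.card_univ, Fintype.card_fin,
        Module.finrank_fintype_fun_eq_card, Fintype.card_fin]
    have hθker : ∀ r, θ r ∈ LinearMap.ker (φ (u - v)) := by
      rintro (⟨b, i⟩ | ⟨d, e⟩)
      · have hsingle : (Pi.single i (1 : Fq)) ∈ StmtAux.VB Fq B Finset.univ :=
          hVBtop ▸ Submodule.mem_top
        have hcomap : StmtAux.VB Fq B Finset.univ ≤
            Submodule.comap ((Θ : _ →ₗ[Fq] F) ∘ₗ StmtAux.embL Fq b)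
              (LinearMap.ker (φ (u - v))) := by
          rw [StmtAux.VB, Submodule.span_le]
          rintro x ⟨⟨j, c'⟩, -, rfl⟩
          simp only [SetLike.mem_coe, Submodule.mem_comap, LinearMap.coe_comp,
            Function.comp_apply, LinearMap.mem_ker]
          have hx : Θ (StmtAux.embL Fq b (fun i => B i (j, c'))) = η (Sum.inl (b, j), c') := by
            rw [hembcol b j c']
          rw [hx]
          exact hzero _
        have hmem := hcomap hsingle
        simp only [Submodule.mem_comap, LinearMap.coe_comp, Function.comp_apply] at hmem
        have hθeq : Θ (StmtAux.embL Fq b (Pi.single i (1 : Fq))) = θ (Sum.inl (b, i)) := by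
          rw [hΘdef, StmtAux.ThetaL_apply]
          rw [Finset.sum_eq_single (Sum.inl (b, i))]
          · simp [StmtAux.embL]
          · rintro (⟨b₀, i₀⟩ | ⟨d₀, e₀⟩) - hne'
            · have hv : StmtAux.embL Fq (Δ := Δ) (α' := α) b (Pi.single i (1 : Fq)) (Sum.inl (b₀, i₀)) = 0 := by
                by_cases hb : b₀ = b
                · subst hb
                  have hi0 : i₀ ≠ i := fun h => hne' (by rw [h])
                  simp [StmtAux.embL, hi0]
                · simp [StmtAux.embL, hb]
              rw [hv]
              simp
            · have hv : StmtAux.embL Fq (Δ := Δ) (α' := α) b (Pi.single i (1 : Fq)) (Sum.inr (d₀, e₀)) = 0 := by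
                simp [StmtAux.embL]
              rw [hv]
              simp
          · intro h; exact absurd (Finset.mem_univ _) h
        rwa [hθeq] at hmem
      · have hηeq : η (Sum.inr d, e) = θ (Sum.inr (d, e)) := by
          rw [hηdef]
          show Θ (fun i => G i (Sum.inr d, e)) = θ (Sum.inr (d, e))
          rw [hΘdef, StmtAux.ThetaL_apply]
          rw [Finset.sum_eq_single (Sum.inr (d, e))]
          · rw [hG4, if_pos ⟨rfl, rfl⟩]
            simp
          · rintro (⟨b₀, i₀⟩ | ⟨d₀, e₀⟩) - hne'
            · rw [hG2]; simp
            · rw [hG4, if_neg]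
              · simp
              · rintro ⟨rfl, rfl⟩; exact hne' rfl
          · intro h; exact absurd (Finset.mem_univ _) h
        exact LinearMap.mem_ker.mpr (by rw [← hηeq]; exact hzero _)
    have hsub : Submodule.span Fq (Set.range θ) ≤ LinearMap.ker (φ (u - v)) :=
      Submodule.span_le.mpr (by rintro x ⟨r, rfl⟩; exact hθker r)
    have h6 : t * Pfun a nL + Δ * α ≤ Module.finrank Fq (LinearMap.ker (φ (u - v))) := by
      have h7 := finrank_span_eq_card hθ
      have h8 : Fintype.card ((Fin t × Fin (Pfun a nL)) ⊕ (Fin Δ × Fin α))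
          = t * Pfun a nL + Δ * α := by simp
      rw [h8] at h7
      rw [← h7]
      exact Submodule.finrank_mono hsub
    have h9 := hker _ hc
    omega
  -- Part 2 : lower bound on the distance
  have LB : ∀ u v, u ≠ v → t * nL + Δ - Pinv a K + 1 ≤ thickDist (enc u) (enc v) := by
    intro u v huv
    have hc : u - v ≠ 0 := sub_ne_zero.mpr huv
    set Z := Finset.univ.filter (fun j : (Fin t × Fin nL) ⊕ Fin Δ =>
      ¬∃ a', enc u (j, a') ≠ enc v (j, a')) with hZdef
    have hZzero : ∀ pc : ((Fin t × Fin nL) ⊕ Fin Δ) × Fin α,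
        pc.1 ∈ Z → φ (u - v) (η pc) = 0 := by
      rintro ⟨j, c'⟩ hj
      rw [hZdef, Finset.mem_filter] at hj
      push_neg at hj
      have hjc := hj.2 c'
      rw [← hencsub u v (j, c'), hjc, sub_self]
    have hCB := CB (u - v) hc Z hZzero
    have hZlt : Z.card < Pinv a K := by
      by_contra hge
      push_neg at hge
      have hmle := StmtAux.Pfun_mono (a := a) hge
      omega
    have hdist := hdisteq u v
    rw [← hZdef] at hdist
    omega
  refine ⟨INJ, LB, ?_⟩
  -- Part 3 : tightness
  set sst := Pinv a K - 1 with hsst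
  set jst := sst / nL with hjst
  set rst := sst % nL with hrst
  have hsstlt : sst < nL * t := by omega
  have hjstlt : jst < t := by
    rw [hjst]
    rw [Nat.div_lt_iff_lt_mul hnL]
    omega
  have hrstlt : rst < nL := Nat.mod_lt _ hnL
  have hsplit : nL * jst + rst = sst := Nat.div_add_mod sst nL
  set Zs : Finset ((Fin t × Fin nL) ⊕ Fin Δ) := Finset.univ.filter
    (fun x => Sum.elim
      (fun bj : Fin t × Fin nL => bj.1.val < jst ∨ (bj.1.val = jst ∧ bj.2.val < rst))
      (fun _ => False) x) with hZsdef
  have hmemZs : ∀ (b : Fin t) (j : Fin nL),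
      (Sum.inl (b, j) ∈ Zs) ↔ (b.val < jst ∨ (b.val = jst ∧ j.val < rst)) := by
    intro b j
    rw [hZsdef, Finset.mem_filter]
    simp
  have hmemZsr : ∀ d : Fin Δ, (Sum.inr d ∈ Zs) ↔ False := by
    intro d
    rw [hZsdef, Finset.mem_filter]
    simp
  have hsBZs : ∀ b : Fin t,
      sB Zs b = if b.val < jst then nL else if b.val = jst then rst else 0 := by
    intro b
    simp only [hsBdef]
    by_cases h1 : b.val < jst
    · rw [if_pos h1]
      have heq : Finset.univ.filter (fun j : Fin nL => Sum.inl (b, j) ∈ Zs) = Finset.univ :=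
        Finset.filter_true_of_mem (fun j _ => (hmemZs b j).mpr (Or.inl h1))
      rw [heq, Finset.card_univ, Fintype.card_fin]
    · by_cases h2 : b.val = jst
      · rw [if_neg h1, if_pos h2]
        have heq : Finset.univ.filter (fun j : Fin nL => Sum.inl (b, j) ∈ Zs)
            = Finset.univ.filter (fun j : Fin nL => j.val < rst) := by
          apply Finset.filter_congr
          intro j _
          rw [hmemZs b j]
          simp [h1, h2]
        rw [heq, StmtAux.card_filter_val_lt nL rst (le_of_lt hrstlt)]
      · rw [if_neg h1, if_neg h2]
        rw [Finset.card_eq_zero, Finset.filter_eq_empty_iff]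
        intro j _
        rw [hmemZs b j]
        simp [h1, h2]
  have hz2Zs : z2 Zs = 0 := by
    simp only [hz2def]
    rw [Finset.card_eq_zero, Finset.filter_eq_empty_iff]
    intro d _
    rw [hmemZsr d]
    simp
  have hcardZs : Zs.card = sst := by
    rw [keycard Zs, hz2Zs, add_zero]
    calc ∑ b, sB Zs b
        = ∑ b : Fin t, (if b.val < jst then nL else if b.val = jst then rst else 0) :=
          Finset.sum_congr rfl fun b _ => hsBZs b
      _ = jst * nL + rst := StmtAux.sum_ite_blocks t jst nL rst hjstlt
      _ = sst := by rw [Nat.mul_comm]; exact hsplit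
  have hrkZs : Module.finrank Fq (colsp Zs) + 1 ≤ K := by
    rw [keyrank Zs, hz2Zs, Nat.mul_zero, add_zero]
    have hsumP : ∑ b, Pfun a (sB Zs b) = jst * Pfun a nL + Pfun a rst := by
      have hsw : ∀ b : Fin t, Pfun a (sB Zs b)
          = (if b.val < jst then Pfun a nL else if b.val = jst then Pfun a rst else 0) := by
        intro b
        rw [hsBZs b]
        split_ifs <;> simp [Pfun]
      rw [Finset.sum_congr rfl (fun b _ => hsw b)]
      exact StmtAux.sum_ite_blocks t jst (Pfun a nL) (Pfun a rst) hjstlt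
    rw [hsumP]
    have hPsst : Pfun a sst < K := hPfunlt sst (by omega)
    have hPeq : jst * Pfun a nL + Pfun a rst = Pfun a sst := by
      rw [← hsplit]
      exact (StmtAux.Pfun_mul_add hper jst rst).symm
    omega
  set V := Submodule.span Fq (η '' {pc | pc.1 ∈ Zs}) with hVdef
  have hVrank : Module.finrank Fq V + 1 ≤ K := by
    rw [hVdef, hfrmap Zs]
    exact hrkZs
  set ρ := Module.finrank Fq V with hρ
  set bV := Module.finBasis Fq V with hbV
  set e : Fin ρ → F := fun i => (bV i : F) with he
  have hspanV : Submodule.span Fq (Set.range e) = V := by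
    have h1 : Submodule.span Fq (Set.range bV) = (⊤ : Submodule Fq V) := bV.span_eq
    have h2 := congrArg (Submodule.map V.subtype) h1
    rw [Submodule.map_span, ← Set.range_comp, Submodule.map_top, Submodule.range_subtype] at h2
    exact h2
  set Λ : (Fin K → F) →ₗ[F] (Fin ρ → F) :=
    LinearMap.pi (fun i => ∑ l : Fin K, (e i ^ q ^ (l : ℕ)) • LinearMap.proj l) with hΛdef
  have hΛapp : ∀ c i, Λ c i = ∑ l : Fin K, e i ^ q ^ (l : ℕ) * c l := by
    intro c i
    rw [hΛdef, LinearMap.pi_apply, LinearMap.sum_apply]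
    apply Finset.sum_congr rfl
    intro l _
    rw [LinearMap.smul_apply, LinearMap.proj_apply, smul_eq_mul]
  obtain ⟨c, hcne, hcΛ⟩ : ∃ c : Fin K → F, c ≠ 0 ∧ ∀ i, Λ c i = 0 := by
    have hnb : LinearMap.ker Λ ≠ ⊥ := by
      intro hbot
      have hinj : Function.Injective Λ := LinearMap.ker_eq_bot.mp hbot
      have hle := LinearMap.finrank_le_finrank_of_injective hinj
      rw [Module.finrank_fintype_fun_eq_card, Module.finrank_fintype_fun_eq_card,
        Fintype.card_fin, Fintype.card_fin] at hle
      omega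
    obtain ⟨c, hcker, hcne⟩ := (Submodule.ne_bot_iff _).mp hnb
    exact ⟨c, hcne, fun i => congrFun (LinearMap.mem_ker.mp hcker) i⟩
  have hφe : ∀ i, φ c (e i) = 0 := by
    intro i
    rw [hφapp]
    have h1 := hcΛ i
    rw [hΛapp] at h1
    rw [← h1]
    apply Finset.sum_congr rfl
    intro l _
    ring
  have hVker : V ≤ LinearMap.ker (φ c) := by
    rw [← hspanV, Submodule.span_le]
    rintro x ⟨i, rfl⟩
    exact LinearMap.mem_ker.mpr (hφe i)
  refine ⟨c, 0, hcne, ?_⟩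
  set Z0 := Finset.univ.filter (fun j : (Fin t × Fin nL) ⊕ Fin Δ =>
    ¬∃ a', enc c (j, a') ≠ enc 0 (j, a')) with hZ0def
  have hZsub : Zs ⊆ Z0 := by
    intro j hj
    rw [hZ0def, Finset.mem_filter]
    refine ⟨Finset.mem_univ _, ?_⟩
    push_neg
    intro a'
    have h1 : enc c (j, a') - enc 0 (j, a') = φ c (η (j, a')) := by
      have h := hencsub c 0 (j, a')
      rwa [sub_zero] at h
    have h2 : η (j, a') ∈ V := hVdef ▸ Submodule.subset_span ⟨(j, a'), hj, rfl⟩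
    have h3 : φ c (η (j, a')) = 0 := hVker h2
    exact sub_eq_zero.mp (h1.trans h3)
  have hZ0card : sst ≤ Z0.card := hcardZs ▸ Finset.card_le_card hZsub
  have hdist0 := hdisteq c 0
  rw [← hZ0def] at hdist0
  have hlb := LB c 0 hcne
  omega
end

section
/- Let (X, B_1,…,B_b) be a t-(n, w, λ) design in which every point lies in exactly λ_1 blocks, let u_s (1 ≤ s ≤ t, u_0 := 0) denote the common value of |N_{x_1} ∪ … ∪ N_{x_s}| over all choices of s distinct points, let F_q be a finite field, let M be a K_L × b matrix over F_q with the MDS property, and suppose there exists an integer k ≤ t with u_{k−1} < K_L ≤ u_k. Define the K_L × (n·λ_1) matrix B_FR whose thick column (of width λ_1) associated with point x ∈ X consists of the λ_1 columns of M indexed by N_x, in some fixed order. Then B_FR is a uniform-rank-accumulation matrix: for every 0 ≤ s ≤ n and every set of s thick columns, the rank of the corresponding submatrix equals ρ_s, where ρ_s := min(u_s, K_L) for s ≤ t and ρ_s := K_L for t < s ≤ n. Moreover, the increment profile a_s := ρ_s − ρ_{s−1} (1 ≤ s ≤ n) is nonincreasing and satisfies ρ_n = a_1 + … + a_n = K_L.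 -/
/-- The rank of the submatrix of `M` formed by the columns indexed by `T`. -/
noncomputable def colRank {𝔽 : Type*} [Field 𝔽] {R b : ℕ}
    (M : Matrix (Fin R) (Fin b) 𝔽) (T : Finset (Fin b)) : ℕ :=
  (M.submatrix id (fun j : T => (j : Fin b))).rank

lemma rank_submatrix_congr {Fq : Type*} [Field Fq] {K : ℕ} {n ι ι' : Type*}
    [Fintype n] [Fintype ι] [Fintype ι'] (M : Matrix (Fin K) n Fq)
    (f : ι → n) (g : ι' → n) (h : Set.range f = Set.range g) :
    (M.submatrix id f).rank = (M.submatrix id g).rank := by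
  rw [Matrix.rank_eq_finrank_span_cols, Matrix.rank_eq_finrank_span_cols]
  have hf : Set.range (M.submatrix id f).col = M.col '' Set.range f := by
    rw [show (M.submatrix id f).col = M.col ∘ f from rfl, Set.range_comp]
  have hg : Set.range (M.submatrix id g).col = M.col '' Set.range g := by
    rw [show (M.submatrix id g).col = M.col ∘ g from rfl, Set.range_comp]
  rw [hf, hg, h]

/-- Let `(X, B_1,…,B_b)` be a `t`-`(n, w, λ)` design in which every
point lies in exactly `λ_1` blocks, let `u s` (`1 ≤ s ≤ t`, `u 0 = 0`) denote the common
value of `|N_{x_1} ∪ … ∪ N_{x_s}|` over all choices of `s` distinct points, let `Fq` be a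
finite field, let `M` be a `K_L × b` matrix over `Fq` with the MDS property, and suppose
there is `k ≤ t` with `u (k-1) < K_L ≤ u k`.  Define the `K_L × (n·λ_1)` matrix `B_FR`
whose thick column (of width `λ_1`) associated with a point `x` consists of the `λ_1`
columns of `M` indexed by `N_x`, in some fixed order (given by `ν`).  Then `B_FR` is a
uniform-rank-accumulation matrix: the rank of any set of `s` thick columns equals `ρ s`,
where `ρ s = min (u s) K_L` for `s ≤ t` and `ρ s = K_L` for `t < s ≤ n`.  Moreover the
increment profile `a_s := ρ s - ρ (s-1)` is nonincreasing and sums to `ρ n = K_L`. -/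
theorem stmt_14 (npts w t lam b KL lam1 : ℕ)
    (ht : 1 ≤ t) (hwt : t ≤ w) (hnw : w < npts) (hlam : 1 ≤ lam)
    (X : Type*) [Fintype X] [DecidableEq X] (hX : Fintype.card X = npts)
    (Bl : Fin b → Finset X) (hw : ∀ j, (Bl j).card = w)
    (hdesign : ∀ T : Finset X, T.card = t →
      (Finset.univ.filter fun j => T ⊆ Bl j).card = lam)
    (hlam1 : ∀ x : X, (Finset.univ.filter fun j => x ∈ Bl j).card = lam1)
    (u : ℕ → ℕ) (hu0 : u 0 = 0)
    (hu : ∀ s, 1 ≤ s → s ≤ t → ∀ E : Finset X, E.card = s →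
      (Finset.univ.filter fun j => ∃ x ∈ E, x ∈ Bl j).card = u s)
    (Fq : Type*) [Field Fq] [Fintype Fq]
    (M : Matrix (Fin KL) (Fin b) Fq)
    (hMDS : ∀ T : Finset (Fin b), colRank M T = min T.card KL)
    (k : ℕ) (hk : k ≤ t) (hlt : u (k - 1) < KL) (hle : KL ≤ u k)
    (ν : X → Fin lam1 → Fin b)
    (hν_inj : ∀ x, Function.Injective (ν x))
    (hν_mem : ∀ x c, x ∈ Bl (ν x c))
    (BFR : Matrix (Fin KL) (X × Fin lam1) Fq)
    (hBFR : ∀ i x c, BFR i (x, c) = M i (ν x c))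
    (ρ : ℕ → ℕ) (hρ : ∀ s, ρ s = if s ≤ t then min (u s) KL else KL) :
    (∀ S : Finset X, thickRank BFR S = ρ S.card)
    ∧ (∀ s, 1 ≤ s → s + 1 ≤ npts → ρ (s + 1) - ρ s ≤ ρ s - ρ (s - 1))
    ∧ ρ npts = KL
    ∧ (∑ s ∈ Finset.range npts, (ρ (s + 1) - ρ s)) = KL := by
  classical
  set N : X → Finset (Fin b) := fun x => Finset.univ.filter (fun j => x ∈ Bl j) with hN
  have hNimage : ∀ x, Finset.image (ν x) Finset.univ = N x := by
    intro x
    apply Finset.eq_of_subset_of_card_le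
    · intro j hj
      simp only [Finset.mem_image, Finset.mem_univ, true_and] at hj
      obtain ⟨c, rfl⟩ := hj
      simp [hN, hν_mem]
    · rw [hlam1, Finset.card_image_of_injective _ (hν_inj x), Finset.card_univ,
        Fintype.card_fin]
  -- card of biUnion over a set of size s
  have hcardB : ∀ s, 1 ≤ s → s ≤ t → ∀ E : Finset X, E.card = s →
      (E.biUnion N).card = u s := by
    intro s h1 hst E hE
    have : E.biUnion N = Finset.univ.filter (fun j => ∃ x ∈ E, x ∈ Bl j) := by
      ext j; simp [hN]
    rw [this]
    exact hu s h1 hst E hE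
  -- monotonicity of u on [0, t]
  have humono : ∀ s1 s2, s1 ≤ s2 → s2 ≤ t → u s1 ≤ u s2 := by
    intro s1 s2 h12 h2t
    rcases Nat.eq_zero_or_pos s1 with rfl | h1
    · rw [hu0]; exact Nat.zero_le _
    have hs2 : s2 ≤ (Finset.univ : Finset X).card := by
      rw [Finset.card_univ, hX]; omega
    obtain ⟨E2, -, hE2⟩ := Finset.exists_subset_card_eq hs2
    obtain ⟨E1, hE12, hE1⟩ := Finset.exists_subset_card_eq (show s1 ≤ E2.card by omega)
    rw [← hcardB s1 h1 (h12.trans h2t) E1 hE1, ← hcardB s2 (h1.trans_le h12) h2t E2 hE2]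
    exact Finset.card_le_card (Finset.biUnion_subset_biUnion_of_subset_left _ hE12)
  -- concavity of u
  have huconc : ∀ s, 1 ≤ s → s + 1 ≤ t → u (s + 1) - u s ≤ u s - u (s - 1) := by
    intro s h1 hst
    have hsc : s + 1 ≤ (Finset.univ : Finset X).card := by
      rw [Finset.card_univ, hX]; omega
    obtain ⟨E, -, hE⟩ := Finset.exists_subset_card_eq hsc
    obtain ⟨x, hx, y, hy, hxy⟩ := Finset.one_lt_card.mp (by omega : 1 < E.card)
    set F := E \ {x, y} with hF
    have hxF : x ∉ F := by simp [hF]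
    have hyF : y ∉ F := by simp [hF]
    have hFcard : F.card = s - 1 := by
      rw [hF, Finset.card_sdiff_of_subset (by intro z hz; simp at hz; rcases hz with rfl | rfl <;> assumption)]
      rw [hE, Finset.card_pair hxy]
      omega
    have hEeq : E = insert x (insert y F) := by
      ext z
      simp only [Finset.mem_insert, hF, Finset.mem_sdiff, Finset.mem_insert,
        Finset.mem_singleton]
      constructor
      · intro hz
        rcases eq_or_ne z x with rfl | hzx
        · exact Or.inl rfl
        rcases eq_or_ne z y with rfl | hzy
        · exact Or.inr (Or.inl rfl)
        · exact Or.inr (Or.inr ⟨hz, by simp [hzx, hzy]⟩)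
      · rintro (rfl | rfl | ⟨hz, -⟩) <;> first | exact hx | exact hy | exact hz
    set A := F.biUnion N with hA
    have hup1 : u (s + 1) = (N x ∪ (N y ∪ A)).card := by
      rw [← hcardB (s + 1) (by omega) hst E hE, hEeq, Finset.biUnion_insert,
        Finset.biUnion_insert]
    have hux : u s = (N x ∪ A).card := by
      rw [← hcardB s h1 (by omega) (insert x F) (by rw [Finset.card_insert_of_notMem hxF, hFcard]; omega),
        Finset.biUnion_insert]
    have huy : u s = (N y ∪ A).card := by
      rw [← hcardB s h1 (by omega) (insert y F) (by rw [Finset.card_insert_of_notMem hyF, hFcard]; omega),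
        Finset.biUnion_insert]
    have hum1 : u (s - 1) = A.card := by
      rcases Nat.eq_or_lt_of_le h1 with h1' | h1'
      · have : F = ∅ := Finset.card_eq_zero.mp (by omega)
        rw [← h1', hu0]  -- u (s-1) with s = 1, i.e. u 0 = 0
        simp [hA, this]
      · exact (hcardB (s - 1) (by omega) (by omega) F hFcard).symm
    have hsub : A ⊆ (N x ∪ A) ∩ (N y ∪ A) := by
      intro j hj; simp [hj]
    have huni : (N x ∪ A) ∪ (N y ∪ A) = N x ∪ (N y ∪ A) := by
      ext j; simp; tauto
    have key := Finset.card_union_add_card_inter (N x ∪ A) (N y ∪ A)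
    have hkey2 := Finset.card_le_card hsub
    rw [huni] at key
    omega
  have hk1 : 1 ≤ k := by
    rcases Nat.eq_zero_or_pos k with rfl | h; · simp only [Nat.zero_sub, hu0] at hlt hle; omega
    · exact h
  have hutKL : KL ≤ u t := hle.trans (humono k t hk le_rfl)
  -- rank of thick columns
  have hrank : ∀ S : Finset X, thickRank BFR S = min (S.biUnion N).card KL := by
    intro S
    have hBsub : BFR.submatrix id (fun p : {p : X × Fin lam1 // p.1 ∈ S} => (p : X × Fin lam1))
        = M.submatrix id (fun p : {p : X × Fin lam1 // p.1 ∈ S} => ν p.1.1 p.1.2) := by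
      ext i p
      simp only [Matrix.submatrix_apply, id_eq]
      rw [show (p : X × Fin lam1) = (p.1.1, p.1.2) from rfl, hBFR]
    have hrange : Set.range (fun p : {p : X × Fin lam1 // p.1 ∈ S} => ν p.1.1 p.1.2)
        = Set.range (fun j : (S.biUnion N : Finset (Fin b)) => (j : Fin b)) := by
      ext j
      simp only [Set.mem_range, Subtype.exists]
      constructor
      · rintro ⟨⟨x, c⟩, hx, rfl⟩
        refine ⟨ν x c, ?_, rfl⟩
        rw [Finset.mem_biUnion]
        exact ⟨x, hx, by simp [hN, hν_mem]⟩
      · rintro ⟨j, hj, rfl⟩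
        rw [Finset.mem_biUnion] at hj
        obtain ⟨x, hxS, hjx⟩ := hj
        rw [← hNimage x, Finset.mem_image] at hjx
        obtain ⟨c, -, rfl⟩ := hjx
        exact ⟨(x, c), hxS, rfl⟩
    rw [thickRank, hBsub,
      rank_submatrix_congr M _ (fun j : (S.biUnion N : Finset (Fin b)) => (j : Fin b)) hrange]
    exact hMDS (S.biUnion N)
  refine ⟨?_, ?_, ?_, ?_⟩
  · intro S
    rw [hrank S, hρ S.card]
    by_cases hst : S.card ≤ t
    · rw [if_pos hst]
      rcases Nat.eq_zero_or_pos S.card with h0 | h1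
      · have : S = ∅ := Finset.card_eq_zero.mp h0
        rw [this]; simp [hu0]
      · rw [hcardB S.card h1 hst S rfl]
    · rw [if_neg hst]
      have hts : t ≤ S.card := by omega
      obtain ⟨E, hES, hE⟩ := Finset.exists_subset_card_eq hts
      have hKL : KL ≤ (S.biUnion N).card := by
        calc KL ≤ u t := hutKL
        _ = (E.biUnion N).card := (hcardB t ht le_rfl E hE).symm
        _ ≤ (S.biUnion N).card :=
          Finset.card_le_card (Finset.biUnion_subset_biUnion_of_subset_left _ hES)
      omega
  · intro s h1 hs
    rw [hρ (s + 1), hρ s, hρ (s - 1)]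
    by_cases h2 : s + 1 ≤ t
    · have hc := huconc s h1 h2
      have hm1 := humono (s - 1) s (by omega) (by omega)
      have hm2 := humono s (s + 1) (by omega) h2
      rw [if_pos h2, if_pos (by omega : s ≤ t), if_pos (by omega : s - 1 ≤ t)]
      omega
    · by_cases h3 : s ≤ t
      · have hst : s = t := by omega
        rw [if_neg h2, if_pos h3, if_pos (by omega : s - 1 ≤ t)]
        have : min (u s) KL = KL := by rw [hst]; omega
        omega
      · rw [if_neg h2, if_neg h3]
        by_cases h4 : s - 1 ≤ t
        · have : s - 1 = t := by omega
          rw [if_pos h4, this]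
          omega
        · rw [if_neg h4]
  · rw [hρ npts, if_neg (by omega)]
  · have hmono : Monotone ρ := by
      apply monotone_nat_of_le_succ
      intro i
      rw [hρ i, hρ (i + 1)]
      by_cases h1 : i + 1 ≤ t
      · rw [if_pos h1, if_pos (by omega : i ≤ t)]
        have := humono i (i + 1) (by omega) h1
        omega
      · rw [if_neg h1]
        split_ifs <;> omega
    rw [Finset.sum_range_tsub hmono, hρ npts, hρ 0, if_neg (by omega), if_pos (by omega),
      hu0]
    simp
end
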